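/- arXiv:2301.13026 — 6 statements merged into one kernel-verified Lean document; each statement's English description precedes it below -/
import Mathlib

section
/- Let 0 < β < α ≤ 1, 1 ≤ γ < ∞, and Ω ⊊ ℝ^N open. For every continuous function u vanishing on ∂Ω and outside Ω, with u ∈ L^γ(Ω) and finite C^{0,α} seminorm, one has [u]_{C^{0,β}} ≤ C₁ ‖u‖_{L^γ}^θ [u]_{C^{0,α}}^{1-θ} with θ = (α-β)/(α + N/γ), for a constant C₁ depending only on N, α, β, γ. -/
open Set Metric MeasureTheory
open scoped ENNReal NNReal

noncomputable def holderSem {N : ℕ} (α : ℝ) (S : Set (EuclideanSpace ℝ (Fin N)))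
    (u : EuclideanSpace ℝ (Fin N) → ℝ) : ENNReal :=
  ⨆ x ∈ S, ⨆ y ∈ S, ENNReal.ofReal (|u x - u y| / ‖x - y‖ ^ α)

lemma holderSem_le {N : ℕ} {α : ℝ} {S : Set (EuclideanSpace ℝ (Fin N))}
    {u : EuclideanSpace ℝ (Fin N) → ℝ} {R : ℝ}
    (h : ∀ x ∈ S, ∀ y ∈ S, |u x - u y| / ‖x - y‖ ^ α ≤ R) :
    holderSem α S u ≤ ENNReal.ofReal R :=
  iSup₂_le fun x hx => iSup₂_le fun y hy => ENNReal.ofReal_le_ofReal (h x hx y hy)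

lemma le_holderSem {N : ℕ} {α : ℝ} {S : Set (EuclideanSpace ℝ (Fin N))}
    {u : EuclideanSpace ℝ (Fin N) → ℝ} {x y : EuclideanSpace ℝ (Fin N)}
    (hx : x ∈ S) (hy : y ∈ S) :
    ENNReal.ofReal (|u x - u y| / ‖x - y‖ ^ α) ≤ holderSem α S u := by
  unfold holderSem
  calc ENNReal.ofReal (|u x - u y| / ‖x - y‖ ^ α)
      ≤ ⨆ y ∈ S, ENNReal.ofReal (|u x - u y| / ‖x - y‖ ^ α) :=
      le_biSup (fun z => ENNReal.ofReal (|u x - u z| / ‖x - z‖ ^ α)) hy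
    _ ≤ ⨆ x ∈ S, ⨆ y ∈ S, ENNReal.ofReal (|u x - u y| / ‖x - y‖ ^ α) :=
      le_biSup (fun x => ⨆ y ∈ S, ENNReal.ofReal (|u x - u y| / ‖x - y‖ ^ α)) hx

lemma crossing {N : ℕ} (Ω : Set (EuclideanSpace ℝ (Fin N))) (hΩ : IsOpen Ω)
    (x y : EuclideanSpace ℝ (Fin N)) (hx : x ∈ Ω) (hy : y ∉ Ω) :
    ∃ z, z ∈ closure Ω ∧ z ∉ Ω ∧ dist x z ≤ dist x y := by
  have hseg : IsPreconnected (segment ℝ x y) := (convex_segment x y).isPreconnected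
  by_cases hfr : ∃ z ∈ segment ℝ x y, z ∈ closure Ω ∧ z ∉ Ω
  · obtain ⟨z, hz1, hz2, hz3⟩ := hfr
    refine ⟨z, hz2, hz3, ?_⟩
    have h := dist_add_dist_of_mem_segment hz1
    nlinarith [dist_nonneg (x := z) (y := y)]
  · push_neg at hfr
    exfalso
    have hsub : segment ℝ x y ⊆ Ω ∪ (closure Ω)ᶜ := by
      intro w hw
      by_cases hwΩ : w ∈ Ω
      · exact Or.inl hwΩ
      · exact Or.inr fun hwc => hwΩ (hfr w hw hwc)
    obtain ⟨w, -, hw1, hw2⟩ := hseg Ω (closure Ω)ᶜ hΩ isClosed_closure.isOpen_compl hsub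
      ⟨x, left_mem_segment ℝ x y, hx⟩
      ⟨y, right_mem_segment ℝ x y, fun hyc => hy (hfr y (right_mem_segment ℝ x y) hyc)⟩
    exact hw2 (subset_closure hw1)

/-- Interpolation estimate for Hölder seminorms: for `0 < β < α ≤ 1`, `1 ≤ γ < ∞`
there is a constant `C₁ = C₁(N, α, β, γ)` such that for every open `Ω ⊊ ℝ^N` and every
continuous `u` vanishing outside `Ω` (hence on `∂Ω`), belonging to `L^γ(Ω)` and with finite
`C^{0,α}` seminorm, one has
`[u]_{C^{0,β}} ≤ C₁ ‖u‖_{L^γ(Ω)}^θ [u]_{C^{0,α}}^{1-θ}` with `θ = (α-β)/(α+N/γ)`. -/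
theorem holder_interpolation {N : ℕ} (hN : 0 < N) (α β γ : ℝ)
    (hβ : 0 < β) (hβα : β < α) (hα1 : α ≤ 1) (hγ : 1 ≤ γ) :
    ∃ C₁ : ℝ, 0 < C₁ ∧
      ∀ (Ω : Set (EuclideanSpace ℝ (Fin N))) (u : EuclideanSpace ℝ (Fin N) → ℝ),
        IsOpen Ω → Ω ≠ Set.univ → Continuous u → (∀ x ∉ Ω, u x = 0) →
        MeasureTheory.MemLp u (ENNReal.ofReal γ) (MeasureTheory.volume.restrict Ω) →
        holderSem α (closure Ω) u ≠ ⊤ →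
        holderSem β (closure Ω) u ≤
          ENNReal.ofReal C₁ *
            (MeasureTheory.eLpNorm u (ENNReal.ofReal γ) (MeasureTheory.volume.restrict Ω)) ^
              ((α - β) / (α + (N : ℝ) / γ)) *
            (holderSem α (closure Ω) u) ^ (1 - (α - β) / (α + (N : ℝ) / γ)) := by
  have hα : 0 < α := hβ.trans hβα
  have hγ0 : 0 < γ := lt_of_lt_of_le one_pos hγ
  have hNpos : (0:ℝ) < N := Nat.cast_pos.mpr hN
  set c : ℝ := (volume (ball (0 : EuclideanSpace ℝ (Fin N)) 1)).toReal with hc_def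
  have hc : 0 < c := ENNReal.toReal_pos (measure_ball_pos volume _ one_pos).ne'
    (measure_ball_lt_top).ne
  set e : ℝ := γ + N / α with he_def
  have he : 0 < e := by positivity
  set t : ℝ := β / α with ht_def
  set s : ℝ := (α - β) / α with hs_def
  have hs : 0 < s := div_pos (by linarith) hα
  have hts : 1 - t = s := by rw [ht_def, hs_def]; field_simp
  set θ : ℝ := (α - β) / (α + (N : ℝ) / γ) with hθ_def
  have hθpos : 0 < θ := div_pos (by linarith) (by positivity)
  refine ⟨(4 * c⁻¹ ^ e⁻¹) ^ s, Real.rpow_pos_of_pos (by positivity) _, ?_⟩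
  set C₁ : ℝ := (4 * c⁻¹ ^ e⁻¹) ^ s with hC₁_def
  have hC₁ : 0 < C₁ := Real.rpow_pos_of_pos (by positivity) _
  intro Ω u hΩ hΩne hu hu0 hmem hKtop
  set p : ℝ≥0∞ := ENNReal.ofReal γ with hp_def
  have hp0 : p ≠ 0 := by
    simp [hp_def, ENNReal.ofReal_eq_zero, not_le, hγ0]
  have hptop : p ≠ ⊤ := ENNReal.ofReal_ne_top
  have hpt : p.toReal = γ := ENNReal.toReal_ofReal hγ0.le
  set K : ℝ≥0∞ := holderSem α (closure Ω) u with hK_def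
  set Kr : ℝ := K.toReal with hKr_def
  have hKr0 : 0 ≤ Kr := ENNReal.toReal_nonneg
  -- Hölder bound in real form
  have hKb : ∀ x ∈ closure Ω, ∀ y ∈ closure Ω, |u x - u y| ≤ Kr * dist x y ^ α := by
    intro x hx y hy
    rcases eq_or_ne x y with rfl | hxy
    · simp [Real.zero_rpow hα.ne']
    · have hd : 0 < dist x y := dist_pos.mpr hxy
      have h1 : ENNReal.ofReal (|u x - u y| / ‖x - y‖ ^ α) ≤ K := le_holderSem hx hy
      have h2 : |u x - u y| / ‖x - y‖ ^ α ≤ Kr :=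
        (ENNReal.ofReal_le_iff_le_toReal hKtop).mp h1
      rw [← dist_eq_norm] at h2
      have hda : 0 < dist x y ^ α := Real.rpow_pos_of_pos hd α
      calc |u x - u y| = |u x - u y| / dist x y ^ α * dist x y ^ α := by field_simp
        _ ≤ Kr * dist x y ^ α := by gcongr
  -- case K = 0
  rcases eq_or_ne K 0 with hK0 | hK0
  · have hKr0' : Kr = 0 := by simp [hKr_def, hK0]
    have : holderSem β (closure Ω) u ≤ ENNReal.ofReal 0 := by
      apply holderSem_le
      intro x hx y hy
      have := hKb x hx y hy
      rw [hKr0', zero_mul] at this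
      have h0 : |u x - u y| = 0 := le_antisymm this (abs_nonneg _)
      rw [h0]
      simp [div_nonneg]
    rw [ENNReal.ofReal_zero] at this
    exact this.trans zero_le
  have hKr : 0 < Kr := ENNReal.toReal_pos hK0 hKtop
  set L : ℝ≥0∞ := eLpNorm u p (volume.restrict Ω) with hL_def
  have hLtop : L ≠ ⊤ := hmem.eLpNorm_ne_top
  set Lr : ℝ := L.toReal with hLr_def
  have hLr0 : 0 ≤ Lr := ENNReal.toReal_nonneg
  -- the key measure-theoretic estimate
  have hkey : ∀ x r, 0 < r → Kr * r ^ α ≤ |u x| / 2 →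
      (|u x| / 2) ^ γ * (r ^ N * c) ≤ Lr ^ γ := by
    intro x r hr hcond
    rcases eq_or_ne (u x) 0 with hux | hux
    · rw [hux]
      simp only [abs_zero, zero_div]
      rw [Real.zero_rpow hγ0.ne', zero_mul]
      positivity
    have hxΩ : x ∈ Ω := by
      by_contra hxΩ
      exact hux (hu0 x hxΩ)
    set a : ℝ := |u x| with ha_def
    have ha : 0 < a := abs_pos.mpr hux
    -- the ball is inside Ω
    have hball : ball x r ⊆ Ω := by
      intro y hy
      by_contra hyΩ
      obtain ⟨z, hz1, hz2, hz3⟩ := crossing Ω hΩ x y hxΩ hyΩ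
      have huz : u z = 0 := hu0 z hz2
      have hxz : |u x - u z| ≤ Kr * dist x z ^ α := hKb x (subset_closure hxΩ) z hz1
      rw [huz, sub_zero] at hxz
      have hdz : dist x z ≤ r := hz3.trans (le_of_lt (by rwa [mem_ball'] at hy))
      have : Kr * dist x z ^ α ≤ Kr * r ^ α := by
        gcongr
      have : a ≤ a / 2 := le_trans hxz (this.trans hcond)
      linarith
    -- lower bound on |u| on the ball
    have hlow : ∀ y ∈ ball x r, a / 2 ≤ |u y| := by
      intro y hy
      have hxy : |u x - u y| ≤ Kr * dist x y ^ α :=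
        hKb x (subset_closure hxΩ) y (subset_closure (hball hy))
      have hdxy : dist x y ≤ r := le_of_lt (by rwa [mem_ball'] at hy)
      have h1 : Kr * dist x y ^ α ≤ a / 2 := by
        refine le_trans ?_ hcond
        gcongr
      have h2 : |u x| - |u y| ≤ |u x - u y| := abs_sub_abs_le_abs_sub _ _
      linarith
    -- lintegral lower bound
    have hmeas : Measurable fun y => ((‖u y‖₊ : ℝ≥0∞)) ^ γ :=
      hu.measurable.nnnorm.coe_nnreal_ennreal.pow_const γ
    have h1 : ENNReal.ofReal ((a / 2) ^ γ) * volume (ball x r)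
        ≤ ∫⁻ y in Ω, (‖u y‖₊ : ℝ≥0∞) ^ γ ∂volume := by
      calc ENNReal.ofReal ((a / 2) ^ γ) * volume (ball x r)
          = ∫⁻ _ in ball x r, ENNReal.ofReal ((a / 2) ^ γ) ∂volume := by
            rw [setLIntegral_const]
        _ ≤ ∫⁻ y in ball x r, (‖u y‖₊ : ℝ≥0∞) ^ γ ∂volume := by
            refine setLIntegral_mono hmeas fun y hy => ?_
            rw [← enorm_eq_nnnorm, ← ofReal_norm, Real.norm_eq_abs,
              ENNReal.ofReal_rpow_of_nonneg (abs_nonneg (u y)) hγ0.le]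
            exact ENNReal.ofReal_le_ofReal
              (Real.rpow_le_rpow (by positivity) (hlow y hy) hγ0.le)
        _ ≤ ∫⁻ y in Ω, (‖u y‖₊ : ℝ≥0∞) ^ γ ∂volume :=
            lintegral_mono' (Measure.restrict_mono hball le_rfl) le_rfl
    have h2 : ∫⁻ y in Ω, (‖u y‖₊ : ℝ≥0∞) ^ γ ∂volume = L ^ γ := by
      rw [hL_def, eLpNorm_eq_lintegral_rpow_enorm_toReal hp0 hptop]; simp only [enorm_eq_nnnorm]; rw [hpt, ← ENNReal.rpow_mul,
        one_div, inv_mul_cancel₀ hγ0.ne', ENNReal.rpow_one]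
    rw [h2] at h1
    have hLγtop : L ^ γ ≠ ⊤ := ENNReal.rpow_ne_top_of_nonneg hγ0.le hLtop
    have h3 := ENNReal.toReal_mono hLγtop h1
    rw [ENNReal.toReal_mul, ENNReal.toReal_ofReal (by positivity)] at h3
    rw [← ENNReal.toReal_rpow] at h3
    have hvol : (volume (ball x r)).toReal = r ^ N * c := by
      rw [Measure.addHaar_ball_of_pos volume x hr, finrank_euclideanSpace_fin,
        ENNReal.toReal_mul, ENNReal.toReal_ofReal (by positivity)]
    rw [hvol] at h3
    exact h3
  -- case u ≡ 0
  by_cases hu0' : ∀ x, u x = 0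
  · have : holderSem β (closure Ω) u ≤ ENNReal.ofReal 0 := by
      apply holderSem_le
      intro x hx y hy
      rw [hu0' x, hu0' y, sub_zero, abs_zero, zero_div]
    rw [ENNReal.ofReal_zero] at this
    exact this.trans zero_le
  push_neg at hu0'
  -- sup bound : |u x| ≤ M
  set M : ℝ := 2 * c⁻¹ ^ e⁻¹ * Lr ^ (γ * e⁻¹) * Kr ^ ((N:ℝ) / α * e⁻¹) with hM_def
  have hM : ∀ x, |u x| ≤ M := by
    intro x
    rcases eq_or_ne (u x) 0 with hux | hux
    · rw [hux, abs_zero]; positivity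
    set a : ℝ := |u x| with ha_def
    have ha : 0 < a := abs_pos.mpr hux
    set r : ℝ := (a / (2 * Kr)) ^ (1/α) with hr_def
    have hq : 0 < a / (2 * Kr) := by positivity
    have hr : 0 < r := Real.rpow_pos_of_pos hq _
    have hrα : r ^ α = a / (2 * Kr) := by
      rw [hr_def, one_div, Real.rpow_inv_rpow hq.le hα.ne']
    have hcond : Kr * r ^ α ≤ a / 2 := by
      rw [hrα]
      have : Kr * (a / (2 * Kr)) = a / 2 := by
        field_simp
      linarith
    have hk := hkey x r hr hcond
    rw [← ha_def] at hk
    have hrN : (r : ℝ) ^ N = (a / (2 * Kr)) ^ ((N:ℝ)/α) := by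
      rw [← Real.rpow_natCast r N, hr_def, ← Real.rpow_mul hq.le]
      congr 1
      field_simp
    rw [hrN] at hk
    have hk' : (a/2) ^ γ * (a/(2*Kr)) ^ ((N:ℝ)/α) * c ≤ Lr ^ γ := by
      rw [mul_assoc]; exact hk
    have h4 : (a/2) ^ γ * (a/(2*Kr)) ^ ((N:ℝ)/α) ≤ Lr ^ γ * c⁻¹ := by
      rw [← div_eq_mul_inv]
      exact (le_div_iff₀ hc).mpr hk'
    have hae : a ^ e ≤ 2 ^ e * c⁻¹ * Lr ^ γ * Kr ^ ((N:ℝ)/α) := by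
      have expand : a ^ e = (a/2) ^ γ * (a/(2*Kr)) ^ ((N:ℝ)/α) * (2 ^ e * Kr ^ ((N:ℝ)/α)) := by
        rw [Real.div_rpow ha.le (by norm_num), Real.div_rpow ha.le (by positivity),
          Real.mul_rpow (by norm_num) hKr.le, he_def, Real.rpow_add ha,
          Real.rpow_add (by norm_num : (0:ℝ) < 2)]
        field_simp
      rw [expand]
      calc (a/2) ^ γ * (a/(2*Kr)) ^ ((N:ℝ)/α) * (2 ^ e * Kr ^ ((N:ℝ)/α))
          ≤ Lr ^ γ * c⁻¹ * (2 ^ e * Kr ^ ((N:ℝ)/α)) :=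
            mul_le_mul_of_nonneg_right h4 (by positivity)
        _ = 2 ^ e * c⁻¹ * Lr ^ γ * Kr ^ ((N:ℝ)/α) := by ring
    have h5 := Real.rpow_le_rpow (by positivity) hae
      (le_of_lt (by positivity : (0:ℝ) < 1/e))
    rw [one_div, Real.rpow_rpow_inv ha.le he.ne'] at h5
    refine h5.trans (le_of_eq ?_)
    rw [Real.mul_rpow (by positivity) (by positivity),
      Real.mul_rpow (by positivity) (by positivity),
      Real.mul_rpow (by positivity) (by positivity),
      Real.rpow_rpow_inv (by norm_num) he.ne', ← Real.rpow_mul hLr0, ← Real.rpow_mul hKr0,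
      hM_def]
  -- Lr is positive
  have hLr : 0 < Lr := by
    obtain ⟨x₀, hx₀⟩ := hu0'
    rcases hLr0.lt_or_eq with h | h
    · exact h
    · exfalso
      have hM0 : M = 0 := by
        rw [hM_def, ← h, Real.zero_rpow (by positivity : (0:ℝ) < γ * e⁻¹).ne']
        ring
      have := hM x₀
      rw [hM0] at this
      exact hx₀ (abs_eq_zero.mp (le_antisymm this (abs_nonneg _)))
  have hM0' : 0 ≤ M := by positivity
  -- the main pointwise bound
  set R : ℝ := C₁ * Lr ^ θ * Kr ^ (1 - θ) with hR_def
  have hR0 : 0 ≤ R := by positivity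
  have hmain : ∀ x ∈ closure Ω, ∀ y ∈ closure Ω, |u x - u y| / ‖x - y‖ ^ β ≤ R := by
    intro x hx y hy
    rcases eq_or_ne x y with rfl | hxy
    · have h0 : |u x - u x| = 0 := by simp
      rw [h0, zero_div]
      exact hR0
    · have hd : 0 < dist x y := dist_pos.mpr hxy
      set d : ℝ := dist x y with hd_def
      have hnorm : ‖x - y‖ = d := (dist_eq_norm x y).symm
      rw [hnorm]
      have hdβ : 0 < d ^ β := Real.rpow_pos_of_pos hd β
      set Q : ℝ := |u x - u y| / d ^ β with hQ_def
      have hQ0 : 0 ≤ Q := by positivity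
      have hA : Q ≤ Kr * d ^ (α - β) := by
        rw [hQ_def, div_le_iff₀ hdβ]
        calc |u x - u y| ≤ Kr * d ^ α := hKb x hx y hy
          _ = Kr * d ^ (α - β) * d ^ β := by
              rw [mul_assoc, ← Real.rpow_add hd, sub_add_cancel]
      have hB : Q ≤ 2 * M * d ^ (-β) := by
        rw [hQ_def, div_le_iff₀ hdβ]
        have h1 : 2 * M * d ^ (-β) * d ^ β = 2 * M := by
          rw [mul_assoc, ← Real.rpow_add hd, neg_add_cancel, Real.rpow_zero, mul_one]
        rw [h1]
        calc |u x - u y| ≤ |u x| + |u y| := abs_sub (u x) (u y)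
          _ ≤ M + M := add_le_add (hM x) (hM y)
          _ = 2 * M := by ring
      rcases hQ0.lt_or_eq with hQpos | hQz
      · have hts' : t + s = 1 := by rw [ht_def, hs_def]; field_simp; ring
        have key : Q ≤ (Kr * d ^ (α - β)) ^ t * (2 * M * d ^ (-β)) ^ s := by
          have h1 : Q = Q ^ t * Q ^ s := by
            rw [← Real.rpow_add hQpos, hts', Real.rpow_one]
          rw [h1]
          exact mul_le_mul (Real.rpow_le_rpow hQ0 hA (by positivity))
            (Real.rpow_le_rpow hQ0 hB hs.le) (by positivity) (by positivity)
        have expand : (Kr * d ^ (α - β)) ^ t * (2 * M * d ^ (-β)) ^ s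
            = Kr ^ t * (2 * M) ^ s * (d ^ ((α - β) * t) * d ^ (-β * s)) := by
          rw [Real.mul_rpow hKr0 (by positivity), Real.mul_rpow (by positivity) (by positivity),
            ← Real.rpow_mul hd.le, ← Real.rpow_mul hd.le]
          ring
        have dexp : d ^ ((α - β) * t) * d ^ (-β * s) = 1 := by
          rw [← Real.rpow_add hd]
          have h0 : (α - β) * t + -β * s = 0 := by
            rw [ht_def, hs_def]
            field_simp
            ring
          rw [h0, Real.rpow_zero]
        have hE1 : γ * e⁻¹ * s = θ := by
          rw [he_def, hs_def, hθ_def]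
          rw [inv_eq_one_div]
          field_simp
        have hE2 : t + (N : ℝ) / α * e⁻¹ * s = 1 - θ := by
          rw [ht_def, he_def, hs_def, hθ_def]
          rw [inv_eq_one_div]
          field_simp
          ring
        have expand2 : Kr ^ t * (2 * M) ^ s = R := by
          have h2M : 2 * M = 4 * c⁻¹ ^ e⁻¹ * Lr ^ (γ * e⁻¹) * Kr ^ ((N:ℝ) / α * e⁻¹) := by
            rw [hM_def]; ring
          rw [h2M, hR_def, hC₁_def]
          rw [Real.mul_rpow (by positivity) (by positivity),
            Real.mul_rpow (by positivity) (by positivity),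
            ← Real.rpow_mul hLr0, ← Real.rpow_mul hKr0, hE1]
          rw [show Kr ^ t * ((4 * c⁻¹ ^ e⁻¹) ^ s * Lr ^ θ * Kr ^ ((N:ℝ) / α * e⁻¹ * s))
              = (4 * c⁻¹ ^ e⁻¹) ^ s * Lr ^ θ * (Kr ^ t * Kr ^ ((N:ℝ) / α * e⁻¹ * s)) by ring]
          rw [← Real.rpow_add hKr, hE2]
        calc Q ≤ (Kr * d ^ (α - β)) ^ t * (2 * M * d ^ (-β)) ^ s := key
          _ = Kr ^ t * (2 * M) ^ s * (d ^ ((α - β) * t) * d ^ (-β * s)) := expand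
          _ = Kr ^ t * (2 * M) ^ s := by rw [dexp, mul_one]
          _ = R := expand2
      · rw [← hQz]
        exact hR0
  -- conclude
  have hfin : holderSem β (closure Ω) u ≤ ENNReal.ofReal R := holderSem_le hmain
  refine hfin.trans (le_of_eq ?_)
  rw [hR_def, ENNReal.ofReal_mul (by positivity), ENNReal.ofReal_mul hC₁.le,
    ← ENNReal.ofReal_rpow_of_pos hLr, ← ENNReal.ofReal_rpow_of_pos hKr,
    hLr_def, hKr_def, ENNReal.ofReal_toReal hLtop, ENNReal.ofReal_toReal hKtop]
end

section
/- Let 0 < β < α ≤ 1, 1 ≤ γ < ∞, and Ω ⊊ ℝ^N open. For every continuous function u vanishing on ∂Ω and outside Ω, with u ∈ L^γ(Ω) and finite C^{0,α} seminorm, one has ‖u‖_{L^∞(Ω)} ≤ C₂ ‖u‖_{L^γ(Ω)}^χ [u]_{C^{0,α}}^{1-χ} with χ = α/(α + N/γ), for a constant C₂ depending only on N, α, γ. -/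
open Set Metric MeasureTheory

lemma exists_boundary_pt {N : ℕ} (Ω : Set (EuclideanSpace ℝ (Fin N))) (hΩ : IsOpen Ω)
    {x y : EuclideanSpace ℝ (Fin N)} (hx : x ∈ Ω) (hy : y ∉ Ω) :
    ∃ z, z ∈ closure Ω ∧ z ∉ Ω ∧ ‖x - z‖ ≤ ‖x - y‖ := by
  set f : ℝ → EuclideanSpace ℝ (Fin N) := fun t => x + t • (y - x) with hf
  have hfc : Continuous f := by continuity
  set S : Set ℝ := f ⁻¹' Ωᶜ ∩ Ici 0 with hS
  have hScl : IsClosed S := ((hΩ.isClosed_compl).preimage hfc).inter isClosed_Ici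
  have h1S : (1:ℝ) ∈ S := by
    constructor
    · simp only [mem_preimage, hf]
      simpa [one_smul] using hy
    · show (0:ℝ) ≤ 1; norm_num
  have hne : S.Nonempty := ⟨1, h1S⟩
  have hbdd : BddBelow S := ⟨0, fun t ht => ht.2⟩
  set t₀ := sInf S with ht₀
  have ht₀S : t₀ ∈ S := hScl.csInf_mem hne hbdd
  have ht₀0 : 0 ≤ t₀ := ht₀S.2
  have ht₀1 : t₀ ≤ 1 := csInf_le hbdd h1S
  have hft₀ : f t₀ ∉ Ω := ht₀S.1
  have ht₀pos : 0 < t₀ := by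
    rcases ht₀0.lt_or_eq with h | h
    · exact h
    · exfalso; apply hft₀; rw [← h]; simpa [hf] using hx
  have hmaps : MapsTo f (Ico 0 t₀) Ω := by
    intro s hs
    by_contra hsΩ
    exact absurd (csInf_le hbdd ⟨hsΩ, hs.1⟩) (not_le.2 hs.2)
  have hcl : f t₀ ∈ closure Ω := by
    have h1 : t₀ ∈ closure (Ico 0 t₀) := by
      rw [closure_Ico ht₀pos.ne]; exact ⟨ht₀0, le_refl _⟩
    have := (hfc.continuousWithinAt (s := Ico 0 t₀) (x := t₀)).mem_closure_image h1
    exact closure_mono (hmaps.image_subset) this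
  refine ⟨f t₀, hcl, hft₀, ?_⟩
  have : x - f t₀ = -(t₀ • (y - x)) := by simp [hf]
  rw [this, norm_neg, norm_smul, Real.norm_eq_abs, abs_of_nonneg ht₀0, norm_sub_rev x y]
  calc t₀ * ‖y - x‖ ≤ 1 * ‖y - x‖ := by
        apply mul_le_mul_of_nonneg_right ht₀1 (norm_nonneg _)
    _ = ‖y - x‖ := one_mul _

/-- Sup-norm interpolation estimate: for `0 < β < α ≤ 1`, `1 ≤ γ < ∞` there is a constant
`C₂ = C₂(N, α, γ)` such that for every open `Ω ⊊ ℝ^N` and every continuous `u` vanishing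
outside `Ω` (hence on `∂Ω`), belonging to `L^γ(Ω)` and with finite `C^{0,α}` seminorm,
one has `‖u‖_{L^∞(Ω)} ≤ C₂ ‖u‖_{L^γ(Ω)}^χ [u]_{C^{0,α}}^{1-χ}` with `χ = α/(α+N/γ)`. -/
theorem sup_norm_interpolation {N : ℕ} (hN : 0 < N) (α β γ : ℝ)
    (hβ : 0 < β) (hβα : β < α) (hα1 : α ≤ 1) (hγ : 1 ≤ γ) :
    ∃ C₂ : ℝ, 0 < C₂ ∧
      ∀ (Ω : Set (EuclideanSpace ℝ (Fin N))) (u : EuclideanSpace ℝ (Fin N) → ℝ),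
        IsOpen Ω → Ω ≠ Set.univ → Continuous u → (∀ x ∉ Ω, u x = 0) →
        MeasureTheory.MemLp u (ENNReal.ofReal γ) (MeasureTheory.volume.restrict Ω) →
        holderSem α (closure Ω) u ≠ ⊤ →
        MeasureTheory.eLpNorm u ⊤ (MeasureTheory.volume.restrict Ω) ≤
          ENNReal.ofReal C₂ *
            (MeasureTheory.eLpNorm u (ENNReal.ofReal γ) (MeasureTheory.volume.restrict Ω)) ^
              (α / (α + (N : ℝ) / γ)) *
            (holderSem α (closure Ω) u) ^ (1 - α / (α + (N : ℝ) / γ)) := by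
  have hα : 0 < α := hβ.trans hβα
  have hγ0 : 0 < γ := lt_of_lt_of_le one_pos hγ
  haveI : Nonempty (Fin N) := ⟨⟨0, hN⟩⟩
  haveI : Nontrivial (EuclideanSpace ℝ (Fin N)) := by
    unfold EuclideanSpace PiLp; infer_instance
  set c : ℝ := (volume (ball (0 : EuclideanSpace ℝ (Fin N)) 1)).toReal with hc
  have hcpos : 0 < c :=
    ENNReal.toReal_pos (measure_ball_pos _ _ one_pos).ne' measure_ball_lt_top.ne
  set χ : ℝ := α / (α + (N : ℝ) / γ) with hχ
  have hden : 0 < α + (N : ℝ) / γ := by positivity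
  have hχpos : 0 < χ := div_pos hα hden
  have hχ1 : χ ≤ 1 := by
    rw [hχ, div_le_one hden]
    nlinarith [div_nonneg (Nat.cast_nonneg N : (0:ℝ) ≤ N) hγ0.le]
  set θ : ℝ := (N : ℝ) / (α * γ) with hθ
  have hθ0 : 0 ≤ θ := by positivity
  have hχθ : χ * (1 + θ) = 1 := by
    rw [hχ, hθ]; field_simp
  have h1χ : 1 - χ = θ * χ := by nlinarith [hχθ]
  refine ⟨2 * c ^ (-(χ / γ)), by positivity, ?_⟩
  intro Ω u hΩ hΩne hu hu0 huγ hsem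
  set p : ENNReal := ENNReal.ofReal γ with hp
  have hp0 : p ≠ 0 := by
    simp [hp, ENNReal.ofReal_eq_zero, not_le, hγ0]
  have hpt : p ≠ ⊤ := ENNReal.ofReal_ne_top
  have hptr : p.toReal = γ := ENNReal.toReal_ofReal hγ0.le
  set L : ℝ := (holderSem α (closure Ω) u).toReal with hL
  have hL0 : 0 ≤ L := ENNReal.toReal_nonneg
  have hLsem : holderSem α (closure Ω) u = ENNReal.ofReal L :=
    (ENNReal.ofReal_toReal hsem).symm
  set A : ℝ := (eLpNorm u p (volume.restrict Ω)).toReal with hA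
  have hA0 : 0 ≤ A := ENNReal.toReal_nonneg
  have hAnorm : eLpNorm u p (volume.restrict Ω) = ENNReal.ofReal A :=
    (ENNReal.ofReal_toReal huγ.eLpNorm_ne_top).symm
  -- Hölder bound
  have hHolder : ∀ x ∈ closure Ω, ∀ y ∈ closure Ω, |u x - u y| ≤ L * ‖x - y‖ ^ α := by
    intro x hx y hy
    rcases eq_or_ne x y with rfl | hxy
    · simp [Real.zero_rpow hα.ne']
    have hxy' : (0:ℝ) < ‖x - y‖ := by
      rw [norm_pos_iff, sub_ne_zero]; exact hxy
    have hle : ENNReal.ofReal (|u x - u y| / ‖x - y‖ ^ α) ≤ holderSem α (closure Ω) u := by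
      have h2 : ENNReal.ofReal (|u x - u y| / ‖x - y‖ ^ α) ≤
          ⨆ y ∈ closure Ω, ENNReal.ofReal (|u x - u y| / ‖x - y‖ ^ α) :=
        le_iSup₂ (f := fun y (_ : y ∈ closure Ω) =>
          ENNReal.ofReal (|u x - u y| / ‖x - y‖ ^ α)) y hy
      exact h2.trans (le_iSup₂ (f := fun x (_ : x ∈ closure Ω) =>
        ⨆ y ∈ closure Ω, ENNReal.ofReal (|u x - u y| / ‖x - y‖ ^ α)) x hx)
    rw [hLsem] at hle
    have := (ENNReal.ofReal_le_ofReal_iff hL0).1 hle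
    have hpow : (0:ℝ) < ‖x - y‖ ^ α := Real.rpow_pos_of_pos hxy' α
    calc |u x - u y| = |u x - u y| / ‖x - y‖ ^ α * ‖x - y‖ ^ α := by
          field_simp
      _ ≤ L * ‖x - y‖ ^ α := by
          exact mul_le_mul_of_nonneg_right this hpow.le
  -- extension bound
  have hExt : ∀ x ∈ Ω, ∀ y ∉ Ω, |u x| ≤ L * ‖x - y‖ ^ α := by
    intro x hx y hy
    obtain ⟨z, hzc, hzn, hzd⟩ := exists_boundary_pt Ω hΩ hx hy
    have h1 : |u x - u z| ≤ L * ‖x - z‖ ^ α :=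
      hHolder x (subset_closure hx) z hzc
    rw [hu0 z hzn, sub_zero] at h1
    refine h1.trans (mul_le_mul_of_nonneg_left ?_ hL0)
    exact Real.rpow_le_rpow (norm_nonneg _) hzd hα.le
  -- pointwise bound
  have hPoint : ∀ x ∈ Ω, |u x| ≤ 2 * c ^ (-(χ / γ)) * A ^ χ * L ^ (1 - χ) := by
    intro x₀ hx₀
    set M : ℝ := |u x₀| with hM
    rcases (abs_nonneg (u x₀)).lt_or_eq with hMpos | hMzero
    swap
    · rw [hM, ← hMzero]; positivity
    rw [← hM] at hMpos
    -- L > 0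
    have hLpos : 0 < L := by
      obtain ⟨y, hy⟩ : ∃ y, y ∉ Ω := by
        by_contra h
        push_neg at h
        exact hΩne (eq_univ_of_forall h)
      rcases hL0.lt_or_eq with h | h
      · exact h
      · exfalso
        have := hExt x₀ hx₀ y hy
        rw [← h, zero_mul] at this
        exact absurd (le_antisymm this hMpos.le) hMpos.ne'
    set r : ℝ := (M / (2 * L)) ^ α⁻¹ with hr
    have hrpos : 0 < r := Real.rpow_pos_of_pos (by positivity) _
    have hrα : r ^ α = M / (2 * L) := by
      rw [hr, ← Real.rpow_mul (by positivity), inv_mul_cancel₀ hα.ne', Real.rpow_one]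
    -- ball ⊆ Ω
    have hball : ball x₀ r ⊆ Ω := by
      intro y hy
      by_contra hyΩ
      have h1 := hExt x₀ hx₀ y hyΩ
      have h2 : ‖x₀ - y‖ ^ α < r ^ α := by
        apply Real.rpow_lt_rpow (norm_nonneg _) _ hα
        rw [← dist_eq_norm]
        exact mem_ball'.1 hy
      have : M < L * r ^ α :=
        h1.trans_lt (mul_lt_mul_of_pos_left h2 hLpos)
      rw [hrα] at this
      have hMlt : M < M / 2 := by
        rw [mul_div_assoc'] at this
        calc M < L * M / (2 * L) := this
          _ = M / 2 := by field_simp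
      linarith
    -- lower bound on ball
    have hlow : ∀ y ∈ ball x₀ r, M / 2 ≤ |u y| := by
      intro y hy
      have h1 : |u x₀ - u y| ≤ L * ‖x₀ - y‖ ^ α :=
        hHolder x₀ (subset_closure hx₀) y (subset_closure (hball hy))
      have h2 : ‖x₀ - y‖ ^ α ≤ r ^ α := by
        apply Real.rpow_le_rpow (norm_nonneg _) _ hα.le
        rw [← dist_eq_norm]
        exact (mem_ball'.1 hy).le
      have h3 : |u x₀ - u y| ≤ M / 2 := by
        calc |u x₀ - u y| ≤ L * r ^ α := h1.trans (mul_le_mul_of_nonneg_left h2 hL0)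
          _ = M / 2 := by rw [hrα]; field_simp
      have := abs_sub_abs_le_abs_sub (u x₀) (u y)
      linarith
    -- integral lower bound
    have hint : ENNReal.ofReal ((M / 2) ^ γ) * volume (ball x₀ r) ≤
        ∫⁻ y in Ω, (‖u y‖₊ : ENNReal) ^ γ ∂volume := by
      have h1 : ∫⁻ y in ball x₀ r, ENNReal.ofReal ((M / 2) ^ γ) ∂volume ≤
          ∫⁻ y in ball x₀ r, (‖u y‖₊ : ENNReal) ^ γ ∂volume := by
        apply setLIntegral_mono (ENNReal.continuous_rpow_const.measurable.comp hu.measurable.enorm)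
        intro y hy
        simp only [Function.comp_apply]
        rw [Real.enorm_eq_ofReal_abs, ENNReal.ofReal_rpow_of_nonneg (abs_nonneg _) hγ0.le]
        exact ENNReal.ofReal_le_ofReal
          (Real.rpow_le_rpow (by positivity) (hlow y hy) hγ0.le)
      have h2 : ∫⁻ y in ball x₀ r, (‖u y‖₊ : ENNReal) ^ γ ∂volume ≤
          ∫⁻ y in Ω, (‖u y‖₊ : ENNReal) ^ γ ∂volume :=
        lintegral_mono' (Measure.restrict_mono hball le_rfl) le_rfl
      calc ENNReal.ofReal ((M / 2) ^ γ) * volume (ball x₀ r)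
          = ∫⁻ _ in ball x₀ r, ENNReal.ofReal ((M / 2) ^ γ) ∂volume := by
            rw [setLIntegral_const]
        _ ≤ _ := h1.trans h2
    have heLp : eLpNorm u p (volume.restrict Ω) =
        (∫⁻ y in Ω, (‖u y‖₊ : ENNReal) ^ γ ∂volume) ^ (1 / γ) := by
      rw [eLpNorm_eq_lintegral_rpow_enorm_toReal hp0 hpt, hptr]; rfl
    have hkey : (ENNReal.ofReal ((M / 2) ^ γ) * volume (ball x₀ r)) ^ (1 / γ) ≤
        eLpNorm u p (volume.restrict Ω) := by
      rw [heLp]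
      exact ENNReal.rpow_le_rpow hint (by positivity)
    -- to real
    have hvol : (volume (ball x₀ r)).toReal = r ^ (N : ℕ) * c := by
      rw [Measure.addHaar_ball volume x₀ hrpos.le, ENNReal.toReal_mul,
        ENNReal.toReal_ofReal (by positivity)]
      congr 1
      simp [finrank_euclideanSpace_fin]
    have hkeyR : ((M / 2) ^ γ * (r ^ (N : ℕ) * c)) ^ (1 / γ) ≤ A := by
      have h1 := ENNReal.toReal_mono huγ.eLpNorm_ne_top hkey
      rw [← ENNReal.toReal_rpow, ENNReal.toReal_mul, ENNReal.toReal_ofReal (by positivity),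
        hvol] at h1
      exact h1
    have hkeyR2 : M / 2 * (c ^ (1 / γ) * (M / (2 * L)) ^ θ) ≤ A := by
      have heq : ((M / 2) ^ γ * (r ^ (N : ℕ) * c)) ^ (1 / γ) =
          M / 2 * (c ^ (1 / γ) * (M / (2 * L)) ^ θ) := by
        rw [Real.mul_rpow (by positivity) (by positivity),
          Real.mul_rpow (by positivity) hcpos.le,
          ← Real.rpow_natCast r N, ← Real.rpow_mul hrpos.le,
          ← Real.rpow_mul (by positivity : (0:ℝ) ≤ M / 2),
          mul_one_div, div_self hγ0.ne', Real.rpow_one, hr,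
          ← Real.rpow_mul (by positivity : (0:ℝ) ≤ M / (2 * L))]
        have : α⁻¹ * ((N : ℝ) * (1 / γ)) = θ := by
          rw [hθ]; field_simp
        rw [this]; ring
      rw [← heq]; exact hkeyR
    -- final algebra
    have hfin : M / 2 * c ^ (χ / γ) / L ^ (1 - χ) ≤ A ^ χ := by
      have hLHS : (0:ℝ) ≤ M / 2 * (c ^ (1 / γ) * (M / (2 * L)) ^ θ) := by positivity
      have h1 := Real.rpow_le_rpow hLHS hkeyR2 hχpos.le
      have heq : (M / 2 * (c ^ (1 / γ) * (M / (2 * L)) ^ θ)) ^ χ =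
          M / 2 * c ^ (χ / γ) / L ^ (1 - χ) := by
        rw [show M / (2 * L) = (M / 2) / L by ring,
          Real.div_rpow (by positivity) hLpos.le,
          show M / 2 * (c ^ (1 / γ) * ((M / 2) ^ θ / L ^ θ)) =
            (M / 2 * (M / 2) ^ θ) * c ^ (1 / γ) / L ^ θ by ring]
        rw [Real.div_rpow (by positivity) (by positivity),
          Real.mul_rpow (by positivity) (by positivity),
          show M / 2 * (M / 2) ^ θ = (M / 2) ^ (1 + θ) by
            rw [Real.rpow_add (by positivity), Real.rpow_one],
          ← Real.rpow_mul (by positivity : (0:ℝ) ≤ M / 2),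
          ← Real.rpow_mul hcpos.le, ← Real.rpow_mul hLpos.le,
          show (1 + θ) * χ = 1 by rw [mul_comm]; exact hχθ,
          Real.rpow_one,
          show 1 / γ * χ = χ / γ by ring,
          show θ * χ = 1 - χ by rw [h1χ]]
      rw [heq] at h1; exact h1
    have hcχ : (0:ℝ) < c ^ (χ / γ) := Real.rpow_pos_of_pos hcpos _
    have hLχ : (0:ℝ) < L ^ (1 - χ) := Real.rpow_pos_of_pos hLpos _
    rw [div_le_iff₀ hLχ] at hfin
    have h2 : M * c ^ (χ / γ) ≤ 2 * (A ^ χ * L ^ (1 - χ)) := by linarith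
    calc M ≤ 2 * (A ^ χ * L ^ (1 - χ)) / c ^ (χ / γ) := (le_div_iff₀ hcχ).2 h2
      _ = 2 * c ^ (-(χ / γ)) * A ^ χ * L ^ (1 - χ) := by
          rw [Real.rpow_neg hcpos.le]; ring
  -- conclude
  set K : ℝ := 2 * c ^ (-(χ / γ)) * A ^ χ * L ^ (1 - χ) with hK
  have hK0 : 0 ≤ K := by positivity
  have hbound : eLpNorm u ⊤ (volume.restrict Ω) ≤ ENNReal.ofReal K := by
    rw [eLpNorm_exponent_top]
    apply eLpNormEssSup_le_of_ae_bound (C := K)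
    apply ae_restrict_of_forall_mem hΩ.measurableSet
    intro x hx
    rw [Real.norm_eq_abs]
    exact hPoint x hx
  refine hbound.trans ?_
  rw [hLsem, hAnorm]
  rw [ENNReal.ofReal_rpow_of_nonneg hA0 hχpos.le,
    ENNReal.ofReal_rpow_of_nonneg hL0 (by linarith : (0:ℝ) ≤ 1 - χ),
    ← ENNReal.ofReal_mul (by positivity), ← ENNReal.ofReal_mul (by positivity)]
end

section
/- Let 0 < α < ∞ and let Ω ⊊ ℝ^N be open with ∫_Ω d_Ω^α dx < ∞, where d_Ω is the distance to ∂Ω. Then the inradius r_Ω of Ω is finite and satisfies r_Ω^{N+α} · N ω_N ∫₀¹ (1-ρ)^α ρ^{N-1} dρ ≤ ∫_Ω d_Ω^α dx, where ω_N is the volume of the unit ball. -/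
open Set Metric MeasureTheory

lemma inradius_key {N : ℕ} (hN : 0 < N) (α : ℝ) (hα : 0 < α)
    (Ω : Set (EuclideanSpace ℝ (Fin N))) (hne : Ω ≠ Set.univ)
    (hint : MeasureTheory.IntegrableOn (fun x => Metric.infDist x Ωᶜ ^ α) Ω)
    (r : ℝ) (hr : 0 < r) (x₀ : EuclideanSpace ℝ (Fin N)) (hsub : Metric.ball x₀ r ⊆ Ω) :
    r ^ ((N : ℝ) + α) *
        ((N : ℝ) * (MeasureTheory.volume (Metric.ball (0 : EuclideanSpace ℝ (Fin N)) 1)).toReal *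
          ∫ ρ in (0:ℝ)..1, (1 - ρ) ^ α * ρ ^ (N - 1)) ≤
      ∫ x in Ω, Metric.infDist x Ωᶜ ^ α := by
  haveI : Nontrivial (EuclideanSpace ℝ (Fin N)) := by
    rw [← Module.finrank_pos_iff (R := ℝ), finrank_euclideanSpace_fin]; exact hN
  have hΩc : Ωᶜ.Nonempty := Set.nonempty_compl.2 hne
  set f : ℝ → ℝ := fun y => max (r - y) 0 ^ α with hf
  have hfcont : Continuous f :=
    (Real.continuous_rpow_const hα.le).comp
      ((continuous_const.sub continuous_id).max continuous_const)
  have hf0 : ∀ y : ℝ, r ≤ y → f y = 0 := by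
    intro y hy
    simp only [hf, max_eq_right (sub_nonpos.2 hy), Real.zero_rpow hα.ne']
  -- Step 1: pointwise lower bound on the ball
  have h1 : ∫ x in ball x₀ r, f (dist x x₀) ≤ ∫ x in Ω, infDist x Ωᶜ ^ α := by
    have hFint : IntegrableOn (fun x => f (dist x x₀)) (ball x₀ r) := by
      apply Measure.integrableOn_of_bounded (M := r ^ α) measure_ball_lt_top.ne
        (hfcont.comp (continuous_id.dist continuous_const)).aestronglyMeasurable
      filter_upwards with x
      have h0 : (0:ℝ) ≤ max (r - dist x x₀) 0 := le_max_right _ _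
      have h1 : max (r - dist x x₀) 0 ≤ r := by
        apply max_le _ hr.le
        have := dist_nonneg (x := x) (y := x₀); linarith
      simp only [Function.comp_apply, id_eq, hf, Real.norm_eq_abs,
        abs_of_nonneg (Real.rpow_nonneg h0 _)]
      exact Real.rpow_le_rpow h0 h1 hα.le
    have step : ∫ x in ball x₀ r, f (dist x x₀) ≤ ∫ x in ball x₀ r, infDist x Ωᶜ ^ α := by
      apply setIntegral_mono_on hFint (hint.mono_set hsub) measurableSet_ball
      intro x hx
      have hdx : dist x x₀ < r := mem_ball.1 hx
      have hle : r - dist x x₀ ≤ infDist x Ωᶜ := by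
        by_contra hlt
        push_neg at hlt
        obtain ⟨y, hyc, hy⟩ := (infDist_lt_iff hΩc).1 hlt
        apply hyc
        apply hsub
        have : dist y x₀ ≤ dist y x + dist x x₀ := dist_triangle y x x₀
        rw [dist_comm y x] at this
        exact mem_ball.2 (by linarith)
      have h0 : (0:ℝ) ≤ max (r - dist x x₀) 0 := le_max_right _ _
      exact Real.rpow_le_rpow h0 (max_le hle infDist_nonneg) hα.le
    refine step.trans ?_
    exact setIntegral_mono_set hint
      (Filter.Eventually.of_forall fun x => Real.rpow_nonneg infDist_nonneg _)
      (HasSubset.Subset.eventuallyLE hsub)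
  -- Step 2: integral over the ball equals integral over the whole space
  have h2 : ∫ x in ball x₀ r, f (dist x x₀) = ∫ x : EuclideanSpace ℝ (Fin N), f (dist x x₀) := by
    apply setIntegral_eq_integral_of_forall_compl_eq_zero
    intro x hx
    exact hf0 _ (not_lt.1 fun h => hx (mem_ball.2 h))
  -- Step 3: translate
  have h3 : ∫ x : EuclideanSpace ℝ (Fin N), f (dist x x₀) = ∫ x : EuclideanSpace ℝ (Fin N), f ‖x‖ := by
    simp_rw [dist_eq_norm]
    exact integral_sub_right_eq_self (fun x => f ‖x‖) x₀
  -- Step 4: polar coordinates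
  have h4 : ∫ x : EuclideanSpace ℝ (Fin N), f ‖x‖ =
      (N : ℝ) * ((volume (ball (0 : EuclideanSpace ℝ (Fin N)) 1)).toReal *
        ∫ y in Ioi (0:ℝ), y ^ (N - 1) * f y) := by
    have := integral_fun_norm_addHaar (volume : Measure (EuclideanSpace ℝ (Fin N))) f
    simp only [finrank_euclideanSpace_fin, smul_eq_mul, nsmul_eq_mul] at this
    exact this
  -- Step 5: reduce to interval integral
  have h5 : ∫ y in Ioi (0:ℝ), y ^ (N - 1) * f y = ∫ y in (0:ℝ)..r, y ^ (N - 1) * f y := by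
    have hgcont : Continuous fun y : ℝ => y ^ (N - 1) * f y :=
      (continuous_pow _).mul hfcont
    have hzero : EqOn (fun y : ℝ => y ^ (N - 1) * f y) 0 (Ioi r) := by
      intro y hy
      simp [hf0 y (le_of_lt hy)]
    have hunion : Ioc (0:ℝ) r ∪ Ioi r = Ioi 0 := Ioc_union_Ioi_eq_Ioi hr.le
    rw [← hunion, setIntegral_union (Ioc_disjoint_Ioi le_rfl) measurableSet_Ioi
      (hgcont.integrableOn_Ioc)
      ((integrableOn_congr_fun hzero measurableSet_Ioi).2 (integrableOn_zero))]
    rw [setIntegral_congr_fun measurableSet_Ioi hzero]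
    simp [intervalIntegral.integral_of_le hr.le]
  -- Step 6: substitution
  have h6 : ∫ y in (0:ℝ)..r, y ^ (N - 1) * f y =
      r ^ ((N : ℝ) + α) * ∫ ρ in (0:ℝ)..1, (1 - ρ) ^ α * ρ ^ (N - 1) := by
    have hs := intervalIntegral.smul_integral_comp_mul_left
      (f := fun y : ℝ => y ^ (N - 1) * f y) (a := (0:ℝ)) (b := 1) r
    rw [mul_zero, mul_one] at hs
    rw [← hs]
    have hcongr : ∀ ρ ∈ Set.uIcc (0:ℝ) 1,
        (r * ρ) ^ (N - 1) * f (r * ρ) =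
          r ^ ((N : ℝ) + α - 1) * ((1 - ρ) ^ α * ρ ^ (N - 1)) := by
      intro ρ hρ
      rw [Set.uIcc_of_le zero_le_one] at hρ
      obtain ⟨h0ρ, hρ1⟩ := hρ
      have h1ρ : (0:ℝ) ≤ 1 - ρ := by linarith
      have hmax : max (r - r * ρ) 0 = r * (1 - ρ) := by
        rw [max_eq_left (by nlinarith)]; ring
      have hrw : f (r * ρ) = r ^ α * (1 - ρ) ^ α := by
        simp only [hf]
        rw [hmax, Real.mul_rpow hr.le h1ρ]
      rw [hrw, mul_pow]
      have hrpow : r ^ (N - 1) * r ^ α = r ^ ((N : ℝ) + α - 1) := by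
        rw [← Real.rpow_natCast r (N - 1), ← Real.rpow_add hr]
        congr 1
        rw [Nat.cast_sub hN]
        push_cast
        ring
      calc r ^ (N - 1) * ρ ^ (N - 1) * (r ^ α * (1 - ρ) ^ α)
          = (r ^ (N - 1) * r ^ α) * ((1 - ρ) ^ α * ρ ^ (N - 1)) := by ring
        _ = r ^ ((N : ℝ) + α - 1) * ((1 - ρ) ^ α * ρ ^ (N - 1)) := by rw [hrpow]
    rw [intervalIntegral.integral_congr hcongr, intervalIntegral.integral_const_mul,
      smul_eq_mul, ← mul_assoc]
    congr 1
    rw [Real.rpow_sub hr, Real.rpow_one]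
    field_simp
  calc r ^ ((N : ℝ) + α) *
        ((N : ℝ) * (volume (ball (0 : EuclideanSpace ℝ (Fin N)) 1)).toReal *
          ∫ ρ in (0:ℝ)..1, (1 - ρ) ^ α * ρ ^ (N - 1))
      = (N : ℝ) * ((volume (ball (0 : EuclideanSpace ℝ (Fin N)) 1)).toReal *
          (r ^ ((N : ℝ) + α) * ∫ ρ in (0:ℝ)..1, (1 - ρ) ^ α * ρ ^ (N - 1))) := by ring
    _ = ∫ x : EuclideanSpace ℝ (Fin N), f ‖x‖ := by rw [h4, h5, h6]
    _ = ∫ x in ball x₀ r, f (dist x x₀) := by rw [h2, h3]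
    _ ≤ ∫ x in Ω, infDist x Ωᶜ ^ α := h1

/-- If `Ω ⊊ ℝ^N` is open and `∫_Ω d_Ω^α < ∞`, then the inradius
`r_Ω = sup {r : ∃ x₀, B_r(x₀) ⊆ Ω}` is finite and satisfies
`r_Ω^{N+α} · N ω_N ∫₀¹ (1-ρ)^α ρ^{N-1} dρ ≤ ∫_Ω d_Ω^α dx`. -/
theorem inradius_bound_of_distance_integrable {N : ℕ} (hN : 0 < N) (α : ℝ) (hα : 0 < α)
    (Ω : Set (EuclideanSpace ℝ (Fin N))) (hΩ : IsOpen Ω) (hne : Ω ≠ Set.univ)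
    (hint : MeasureTheory.IntegrableOn (fun x => Metric.infDist x Ωᶜ ^ α) Ω) :
    BddAbove {r : ℝ | ∃ x₀ : EuclideanSpace ℝ (Fin N), Metric.ball x₀ r ⊆ Ω} ∧
      sSup {r : ℝ | ∃ x₀ : EuclideanSpace ℝ (Fin N), Metric.ball x₀ r ⊆ Ω} ^ ((N : ℝ) + α) *
          ((N : ℝ) * (MeasureTheory.volume (Metric.ball (0 : EuclideanSpace ℝ (Fin N)) 1)).toReal *
            ∫ ρ in (0:ℝ)..1, (1 - ρ) ^ α * ρ ^ (N - 1)) ≤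
        ∫ x in Ω, Metric.infDist x Ωᶜ ^ α := by
  set S := {r : ℝ | ∃ x₀ : EuclideanSpace ℝ (Fin N), Metric.ball x₀ r ⊆ Ω} with hS
  set I := ∫ x in Ω, Metric.infDist x Ωᶜ ^ α with hI
  set C := (N : ℝ) * (MeasureTheory.volume (Metric.ball (0 : EuclideanSpace ℝ (Fin N)) 1)).toReal *
      ∫ ρ in (0:ℝ)..1, (1 - ρ) ^ α * ρ ^ (N - 1) with hC
  set e := (N : ℝ) + α with he
  have he0 : 0 < e := by positivity
  have hI0 : 0 ≤ I :=
    setIntegral_nonneg hΩ.measurableSet fun x _ => Real.rpow_nonneg infDist_nonneg _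
  have hC0 : 0 < C := by
    have hω : 0 < (MeasureTheory.volume (Metric.ball (0 : EuclideanSpace ℝ (Fin N)) 1)).toReal :=
      ENNReal.toReal_pos (measure_ball_pos volume 0 one_pos).ne' measure_ball_lt_top.ne
    have hJ : 0 < ∫ ρ in (0:ℝ)..1, (1 - ρ) ^ α * ρ ^ (N - 1) := by
      apply intervalIntegral.intervalIntegral_pos_of_pos_on
      · apply Continuous.intervalIntegrable
        exact ((Real.continuous_rpow_const hα.le).comp
          (continuous_const.sub continuous_id)).mul (continuous_pow _)
      · intro x hx
        have h1 : 0 < 1 - x := by simp only [Set.mem_Ioo] at hx; linarith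
        have h2 : 0 < x := hx.1
        positivity
      · exact one_pos
    have hNpos : (0:ℝ) < N := Nat.cast_pos.2 hN
    exact mul_pos (mul_pos hNpos hω) hJ
  have key : ∀ r ∈ S, r ≤ (I / C) ^ e⁻¹ := by
    intro r hr
    obtain ⟨x₀, hsub⟩ := hr
    by_cases hrpos : 0 < r
    · have hb := inradius_key hN α hα Ω hne hint r hrpos x₀ hsub
      rw [← hC, ← hI, ← he] at hb
      have h2 : r ^ e ≤ I / C := (le_div_iff₀ hC0).2 hb
      calc r = (r ^ e) ^ e⁻¹ := (Real.rpow_rpow_inv hrpos.le he0.ne').symm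
        _ ≤ (I / C) ^ e⁻¹ :=
            Real.rpow_le_rpow (Real.rpow_nonneg hrpos.le _) h2 (inv_nonneg.2 he0.le)
    · exact le_trans (not_lt.1 hrpos) (Real.rpow_nonneg (div_nonneg hI0 hC0.le) _)
  have hbdd : BddAbove S := ⟨(I / C) ^ e⁻¹, key⟩
  refine ⟨hbdd, ?_⟩
  have h0S : (0:ℝ) ∈ S := ⟨0, by simp⟩
  have hS_ne : S.Nonempty := ⟨0, h0S⟩
  have hsup0 : 0 ≤ sSup S := le_csSup hbdd h0S
  have hsup_le : sSup S ≤ (I / C) ^ e⁻¹ := csSup_le hS_ne key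
  have hfin : sSup S ^ e ≤ I / C := by
    calc sSup S ^ e ≤ ((I / C) ^ e⁻¹) ^ e :=
          Real.rpow_le_rpow hsup0 hsup_le he0.le
      _ = I / C := Real.rpow_inv_rpow (div_nonneg hI0 hC0.le) he0.ne'
  calc sSup S ^ e * C ≤ (I / C) * C := mul_le_mul_of_nonneg_right hfin hC0.le
    _ = I := div_mul_cancel₀ I hC0.ne'
end

section
/- Let Ω ⊊ ℝ^N be open with d_Ω^α ∈ L¹(ℝ^N) for some 0 < α < ∞ (d_Ω extended by zero outside Ω). Then for every R ≥ r_Ω/2 and every x with |x| > R + r_Ω/2, one has d_Ω(x) ≤ 2 (ω_N^{-1} ∫_{ℝ^N \ B_R} d_Ω^α dy)^{1/(N+α)}. In particular, ‖d_Ω‖_{L^∞(ℝ^N \ B_R)} → 0 as R → ∞, i.e. Ω is quasibounded. -/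
open Set Metric MeasureTheory

set_option maxHeartbeats 1000000

private lemma distance_decay_aux {N : ℕ} (hN : 0 < N) (α : ℝ) (hα : 0 < α)
    (Ω : Set (EuclideanSpace ℝ (Fin N)))
    (hint : MeasureTheory.Integrable (fun x : EuclideanSpace ℝ (Fin N) =>
      Metric.infDist x Ωᶜ ^ α))
    (rΩ : ℝ) (hr : IsLUB (Set.range fun x => Metric.infDist x Ωᶜ) rΩ) :
    ∀ R : ℝ, rΩ / 2 ≤ R → ∀ x : EuclideanSpace ℝ (Fin N), R + rΩ / 2 < ‖x‖ →
      Metric.infDist x Ωᶜ ≤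
        2 * ((MeasureTheory.volume (Metric.ball (0 : EuclideanSpace ℝ (Fin N)) 1)).toReal⁻¹ *
          ∫ y in (Metric.ball (0 : EuclideanSpace ℝ (Fin N)) R)ᶜ,
            Metric.infDist y Ωᶜ ^ α) ^ (((N : ℝ) + α)⁻¹) := by
  haveI : Nonempty (Fin N) := ⟨⟨0, hN⟩⟩
  intro R hR x hx
  have hfnn : ∀ y : EuclideanSpace ℝ (Fin N), 0 ≤ Metric.infDist y Ωᶜ ^ α :=
    fun y => Real.rpow_nonneg Metric.infDist_nonneg α
  have hωpos : 0 < (MeasureTheory.volume (Metric.ball (0 : EuclideanSpace ℝ (Fin N)) 1)).toReal :=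
    ENNReal.toReal_pos (Metric.measure_ball_pos _ _ one_pos).ne' measure_ball_lt_top.ne
  set ωr : ℝ := (MeasureTheory.volume (Metric.ball (0 : EuclideanSpace ℝ (Fin N)) 1)).toReal
  have hNα : (0:ℝ) < (N : ℝ) + α := by positivity
  have ht0 : 0 ≤ Metric.infDist x Ωᶜ := Metric.infDist_nonneg
  have htr : Metric.infDist x Ωᶜ ≤ rΩ := hr.1 ⟨x, rfl⟩
  have hrΩ0 : 0 ≤ rΩ := le_trans ht0 htr
  set t : ℝ := Metric.infDist x Ωᶜ
  set I : ℝ := ∫ y in (Metric.ball (0 : EuclideanSpace ℝ (Fin N)) R)ᶜ,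
    Metric.infDist y Ωᶜ ^ α with hI
  have hI0 : 0 ≤ I := MeasureTheory.integral_nonneg fun y => hfnn y
  have hωI : 0 ≤ ωr⁻¹ * I := mul_nonneg (inv_nonneg.mpr hωpos.le) hI0
  have hRHS0 : 0 ≤ (ωr⁻¹ * I) ^ (((N : ℝ) + α)⁻¹) := Real.rpow_nonneg hωI _
  rcases eq_or_lt_of_le ht0 with ht | ht
  · rw [← ht]; exact mul_nonneg (by norm_num) hRHS0
  have hsub : Metric.ball x (t/2) ⊆ (Metric.ball (0 : EuclideanSpace ℝ (Fin N)) R)ᶜ := by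
    intro y hy
    simp only [Metric.mem_ball, Set.mem_compl_iff, not_lt] at hy ⊢
    have h2 : dist x 0 ≤ dist x y + dist y 0 := dist_triangle _ _ _
    have hx0 : dist x (0 : EuclideanSpace ℝ (Fin N)) = ‖x‖ := by simp
    have hy0 : dist y (0 : EuclideanSpace ℝ (Fin N)) = ‖y‖ := by simp
    have h1 : dist x y < t / 2 := by rw [dist_comm]; exact hy
    rw [hx0] at h2
    rw [hy0]
    have : t / 2 ≤ rΩ / 2 := by linarith
    linarith
  have hlow : ∀ y ∈ Metric.ball x (t/2), (t/2) ^ α ≤ Metric.infDist y Ωᶜ ^ α := by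
    intro y hy
    have h1 : t ≤ Metric.infDist y Ωᶜ + dist x y := Metric.infDist_le_infDist_add_dist
    have h2 : dist x y < t / 2 := by rw [dist_comm]; exact hy
    exact Real.rpow_le_rpow (by positivity) (by linarith) hα.le
  have step1 : (t/2) ^ α * (MeasureTheory.volume (Metric.ball x (t/2))).toReal ≤
      ∫ y in Metric.ball x (t/2), Metric.infDist y Ωᶜ ^ α :=
    by have := MeasureTheory.setIntegral_ge_of_const_le measurableSet_ball
         measure_ball_lt_top.ne hlow hint.integrableOn
       rw [smul_eq_mul, mul_comm] at this; exact this
  have step2 : (∫ y in Metric.ball x (t/2), Metric.infDist y Ωᶜ ^ α) ≤ I :=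
    MeasureTheory.setIntegral_mono_set hint.integrableOn
      (Filter.Eventually.of_forall fun y => hfnn y)
      (HasSubset.Subset.eventuallyLE hsub)
  have hvol : (MeasureTheory.volume (Metric.ball x (t/2))).toReal = (t/2) ^ N * ωr := by
    rw [MeasureTheory.Measure.addHaar_ball volume x (by positivity : (0:ℝ) ≤ t/2),
      ENNReal.toReal_mul, ENNReal.toReal_ofReal (by positivity)]
    congr 2
    simp [finrank_euclideanSpace_fin]
  have key : (t/2) ^ (((N : ℝ) + α)) * ωr ≤ I := by
    have heq : (t/2) ^ (((N : ℝ) + α)) = (t/2 : ℝ) ^ (N : ℝ) * (t/2) ^ α :=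
      Real.rpow_add (by positivity) _ _
    rw [heq, Real.rpow_natCast]
    calc (t/2 : ℝ) ^ N * (t/2) ^ α * ωr = (t/2) ^ α * ((t/2) ^ N * ωr) := by ring
      _ ≤ I := by rw [← hvol]; exact le_trans step1 step2
  have key2 : (t/2) ^ (((N : ℝ) + α)) ≤ ωr⁻¹ * I := by
    rw [le_inv_mul_iff₀ hωpos, mul_comm]
    exact key
  have final : t/2 ≤ (ωr⁻¹ * I) ^ (((N : ℝ) + α)⁻¹) := by
    calc t/2 = ((t/2) ^ (((N : ℝ) + α))) ^ (((N : ℝ) + α)⁻¹) :=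
          (Real.rpow_rpow_inv (by positivity) hNα.ne').symm
      _ ≤ (ωr⁻¹ * I) ^ (((N : ℝ) + α)⁻¹) :=
          Real.rpow_le_rpow (Real.rpow_nonneg (by positivity) _) key2 (by positivity)
  linarith

/-- If `Ω ⊊ ℝ^N` is open and `d_Ω^α ∈ L¹(ℝ^N)` (the distance to `∂Ω` extended by zero
outside `Ω`) for some `0 < α < ∞`, then for every `R ≥ r_Ω/2` and every `x` with
`|x| > R + r_Ω/2` one has
`d_Ω(x) ≤ 2 (ω_N⁻¹ ∫_{ℝ^N \ B_R} d_Ω^α)^{1/(N+α)}`; in particular `Ω` is quasibounded. -/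
theorem distance_decay_of_integrable {N : ℕ} (hN : 0 < N) (α : ℝ) (hα : 0 < α)
    (Ω : Set (EuclideanSpace ℝ (Fin N))) (hΩ : IsOpen Ω) (hne : Ω ≠ Set.univ)
    (hint : MeasureTheory.Integrable (fun x : EuclideanSpace ℝ (Fin N) =>
      Metric.infDist x Ωᶜ ^ α))
    (rΩ : ℝ) (hr : IsLUB (Set.range fun x => Metric.infDist x Ωᶜ) rΩ) :
    (∀ R : ℝ, rΩ / 2 ≤ R → ∀ x : EuclideanSpace ℝ (Fin N), R + rΩ / 2 < ‖x‖ →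
      Metric.infDist x Ωᶜ ≤
        2 * ((MeasureTheory.volume (Metric.ball (0 : EuclideanSpace ℝ (Fin N)) 1)).toReal⁻¹ *
          ∫ y in (Metric.ball (0 : EuclideanSpace ℝ (Fin N)) R)ᶜ,
            Metric.infDist y Ωᶜ ^ α) ^ (((N : ℝ) + α)⁻¹)) ∧
    (∀ ε > (0:ℝ), ∃ R : ℝ, ∀ x : EuclideanSpace ℝ (Fin N), R < ‖x‖ →
      Metric.infDist x Ωᶜ < ε) := by
  haveI : Nonempty (Fin N) := ⟨⟨0, hN⟩⟩
  have main := distance_decay_aux hN α hα Ω hint rΩ hr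
  refine ⟨main, ?_⟩
  intro ε hε
  have hfnn : ∀ y : EuclideanSpace ℝ (Fin N), 0 ≤ Metric.infDist y Ωᶜ ^ α :=
    fun y => Real.rpow_nonneg Metric.infDist_nonneg α
  have hωpos : 0 < (MeasureTheory.volume (Metric.ball (0 : EuclideanSpace ℝ (Fin N)) 1)).toReal :=
    ENNReal.toReal_pos (Metric.measure_ball_pos _ _ one_pos).ne' measure_ball_lt_top.ne
  set ωr : ℝ := (MeasureTheory.volume (Metric.ball (0 : EuclideanSpace ℝ (Fin N)) 1)).toReal
  have hNα : (0:ℝ) < (N : ℝ) + α := by positivity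
  have hrΩ0 : 0 ≤ rΩ := le_trans Metric.infDist_nonneg
    (hr.1 (Set.mem_range_self (0 : EuclideanSpace ℝ (Fin N))))
  set δ : ℝ := ωr * (ε/4) ^ (((N : ℝ) + α)) with hδ
  have hδpos : 0 < δ := by
    have := Real.rpow_pos_of_pos (by positivity : (0:ℝ) < ε/4) (((N : ℝ) + α))
    positivity
  have hunion : (⋃ n : ℕ, Metric.ball (0 : EuclideanSpace ℝ (Fin N)) (n : ℝ)) = Set.univ :=
    Metric.iUnion_ball_nat 0
  have htend : Filter.Tendsto
      (fun n : ℕ => ∫ y in Metric.ball (0 : EuclideanSpace ℝ (Fin N)) (n : ℝ),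
        Metric.infDist y Ωᶜ ^ α)
      Filter.atTop (nhds (∫ y, Metric.infDist y Ωᶜ ^ α)) := by
    have h := MeasureTheory.tendsto_setIntegral_of_monotone
      (s := fun n : ℕ => Metric.ball (0 : EuclideanSpace ℝ (Fin N)) (n : ℝ))
      (f := fun y => Metric.infDist y Ωᶜ ^ α)
      (fun n => measurableSet_ball)
      (fun m n hmn => Metric.ball_subset_ball (by exact_mod_cast hmn))
      (by rw [hunion]; exact hint.integrableOn)
    rwa [hunion, MeasureTheory.setIntegral_univ] at h
  have hev : ∀ᶠ n : ℕ in Filter.atTop,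
      (∫ y, Metric.infDist y Ωᶜ ^ α) - δ <
        ∫ y in Metric.ball (0 : EuclideanSpace ℝ (Fin N)) (n : ℝ), Metric.infDist y Ωᶜ ^ α :=
    htend.eventually (eventually_gt_nhds (by linarith))
  obtain ⟨n, hn⟩ := hev.exists
  have hcompl : (∫ y in Metric.ball (0 : EuclideanSpace ℝ (Fin N)) (n : ℝ),
        Metric.infDist y Ωᶜ ^ α) +
      (∫ y in (Metric.ball (0 : EuclideanSpace ℝ (Fin N)) (n : ℝ))ᶜ,
        Metric.infDist y Ωᶜ ^ α) = ∫ y, Metric.infDist y Ωᶜ ^ α :=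
    MeasureTheory.integral_add_compl measurableSet_ball hint
  have htail : (∫ y in (Metric.ball (0 : EuclideanSpace ℝ (Fin N)) (n : ℝ))ᶜ,
      Metric.infDist y Ωᶜ ^ α) < δ := by linarith
  set R₀ : ℝ := max (n : ℝ) (rΩ / 2) with hR₀
  refine ⟨R₀ + rΩ / 2, fun x hx => ?_⟩
  have h1 := main R₀ (le_max_right _ _) x hx
  have hmono : (∫ y in (Metric.ball (0 : EuclideanSpace ℝ (Fin N)) R₀)ᶜ,
      Metric.infDist y Ωᶜ ^ α) ≤
      (∫ y in (Metric.ball (0 : EuclideanSpace ℝ (Fin N)) (n : ℝ))ᶜ,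
        Metric.infDist y Ωᶜ ^ α) :=
    MeasureTheory.setIntegral_mono_set hint.integrableOn
      (Filter.Eventually.of_forall fun y => hfnn y)
      (HasSubset.Subset.eventuallyLE
        (Set.compl_subset_compl.mpr (Metric.ball_subset_ball (le_max_left _ _))))
  set I : ℝ := ∫ y in (Metric.ball (0 : EuclideanSpace ℝ (Fin N)) R₀)ᶜ,
    Metric.infDist y Ωᶜ ^ α with hIdef
  have hI0 : 0 ≤ I := MeasureTheory.integral_nonneg fun y => hfnn y
  have h2 : ωr⁻¹ * I ≤ (ε/4) ^ (((N : ℝ) + α)) := by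
    have hle : I ≤ δ := le_of_lt (lt_of_le_of_lt hmono htail)
    calc ωr⁻¹ * I ≤ ωr⁻¹ * δ := mul_le_mul_of_nonneg_left hle (by positivity)
      _ = (ε/4) ^ (((N : ℝ) + α)) := by rw [hδ, inv_mul_cancel_left₀ hωpos.ne']
  have h3 : (ωr⁻¹ * I) ^ (((N : ℝ) + α)⁻¹) ≤ ε/4 := by
    calc (ωr⁻¹ * I) ^ (((N : ℝ) + α)⁻¹)
        ≤ ((ε/4) ^ (((N : ℝ) + α))) ^ (((N : ℝ) + α)⁻¹) :=
          Real.rpow_le_rpow (mul_nonneg (by positivity) hI0) h2 (by positivity)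
      _ = ε/4 := Real.rpow_rpow_inv (by positivity) hNα.ne'
  calc Metric.infDist x Ωᶜ ≤ 2 * (ωr⁻¹ * I) ^ (((N : ℝ) + α)⁻¹) := h1
    _ ≤ 2 * (ε/4) := by linarith
    _ < ε := by linarith
end

section
/- For 1 < p < ∞ and 1 ≤ q < ∞, the sharp one-dimensional Poincaré–Sobolev constant π_{p,q} := (inf{∫₀¹|φ'|^p : φ ∈ C_0^∞((0,1)), ‖φ‖_{L^q(0,1)} = 1})^{1/p} satisfies π_{p,q} ≥ 2^{1-1/p} (q(1-1/p)+1)^{1/q}. -/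
open Set MeasureTheory intervalIntegral
open scoped ENNReal

lemma holder_interval {f : ℝ → ℝ} (hf : Continuous f) (hcs : HasCompactSupport f)
    {p : ℝ} (hp : 1 < p) {a b : ℝ} (hab : a ≤ b) :
    ∫ x in a..b, |f x| ≤ (∫ x in a..b, |f x| ^ p) ^ (1/p) * (b - a) ^ (1 - 1/p) := by
  have hp0 : (0:ℝ) < p := lt_trans one_pos hp
  set r : ℝ := p / (p - 1) with hr
  have hpq : p.HolderConjugate r := (Real.holderConjugate_iff_eq_conjExponent hp).2 hr
  have hrinv : 1 / r = 1 - 1/p := by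
    rw [one_div, one_div, ← hpq.one_sub_inv]
  rw [integral_of_le hab, integral_of_le hab]
  set μ := volume.restrict (Ioc a b) with hμ
  have hmemf : MemLp (fun x => |f x|) (ENNReal.ofReal p) μ :=
    ((hf.abs).memLp_of_hasCompactSupport (hcs.abs)).restrict _
  have hmemg : MemLp (fun _ : ℝ => (1:ℝ)) (ENNReal.ofReal r) μ := by
    have : IsFiniteMeasure μ := by
      rw [hμ]
      exact ⟨by simp [Real.volume_Ioc, lt_top_iff_ne_top]⟩
    exact memLp_const 1
  have H := integral_mul_le_Lp_mul_Lq_of_nonneg (μ := μ) hpq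
    (f := fun x => |f x|) (g := fun _ => (1:ℝ))
    (Filter.Eventually.of_forall fun x => abs_nonneg _) (Filter.Eventually.of_forall fun x => zero_le_one)
    hmemf hmemg
  simp only [mul_one, Real.one_rpow] at H
  have h1 : ∫ _ : ℝ, (1:ℝ) ∂μ = b - a := by
    rw [hμ, setIntegral_const, smul_eq_mul, mul_one, Real.volume_real_Ioc_of_le hab]
  rw [h1, hrinv] at H
  exact H

lemma pointwise_bound {φ : ℝ → ℝ} (hφ : ContDiff ℝ (⊤ : ℕ∞) φ) (hcs : HasCompactSupport φ)
    (hsupp : tsupport φ ⊆ Set.Ioo 0 1) {p : ℝ} (hp : 1 < p) {t : ℝ} (ht : t ∈ Icc (0:ℝ) 1) :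
    |φ t| ≤ (∫ s in Set.Ioo (0:ℝ) 1, |deriv φ s| ^ p) ^ (1/p) * t ^ (1 - 1/p) ∧
    |φ t| ≤ (∫ s in Set.Ioo (0:ℝ) 1, |deriv φ s| ^ p) ^ (1/p) * (1 - t) ^ (1 - 1/p) := by
  have hp0 : (0:ℝ) < p := lt_trans one_pos hp
  set K := ∫ s in Set.Ioo (0:ℝ) 1, |deriv φ s| ^ p with hKdef
  have hd : Differentiable ℝ φ := hφ.differentiable (by simp)
  have hd' : Continuous (deriv φ) := hφ.continuous_deriv (by exact_mod_cast le_top)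
  have hcs' : HasCompactSupport (deriv φ) := hcs.deriv
  have hφ0 : φ 0 = 0 := by
    apply image_eq_zero_of_notMem_tsupport
    intro h; have := hsupp h; simp at this
  have hφ1 : φ 1 = 0 := by
    apply image_eq_zero_of_notMem_tsupport
    intro h; have := hsupp h; exact absurd this.2 (lt_irrefl 1)
  have hgc : Continuous fun s => |deriv φ s| ^ p :=
    (hd'.abs).rpow_const (fun x => Or.inr hp0.le)
  have hii : ∀ a b : ℝ, IntervalIntegrable (fun s => |deriv φ s| ^ p) volume a b :=
    fun a b => hgc.intervalIntegrable a b
  have hK01 : (∫ s in (0:ℝ)..1, |deriv φ s| ^ p) = K := by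
    rw [integral_of_le zero_le_one, integral_Ioc_eq_integral_Ioo]
  have hKsub : ∀ a b : ℝ, 0 ≤ a → a ≤ b → b ≤ 1 →
      (∫ s in a..b, |deriv φ s| ^ p) ≤ K := by
    intro a b ha hab hb1
    rw [← hK01]
    exact integral_mono_interval ha hab hb1
      (Filter.Eventually.of_forall fun x => Real.rpow_nonneg (abs_nonneg _) _) (hii 0 1)
  have hK0 : 0 ≤ K := by
    rw [← hK01]
    exact intervalIntegral.integral_nonneg zero_le_one
      (fun x _ => Real.rpow_nonneg (abs_nonneg _) _)
  constructor
  · -- left bound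
    have hftc : φ t = ∫ s in (0:ℝ)..t, deriv φ s := by
      rw [integral_deriv_eq_sub (fun x _ => hd x) (hd'.intervalIntegrable _ _), hφ0, sub_zero]
    calc |φ t| = |∫ s in (0:ℝ)..t, deriv φ s| := by rw [hftc]
      _ ≤ ∫ s in (0:ℝ)..t, |deriv φ s| := abs_integral_le_integral_abs ht.1
      _ ≤ (∫ s in (0:ℝ)..t, |deriv φ s| ^ p) ^ (1/p) * (t - 0) ^ (1 - 1/p) :=
          holder_interval hd' hcs' hp ht.1
      _ ≤ K ^ (1/p) * t ^ (1 - 1/p) := by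
          rw [sub_zero]
          apply mul_le_mul_of_nonneg_right _ (Real.rpow_nonneg ht.1 _)
          exact Real.rpow_le_rpow (intervalIntegral.integral_nonneg ht.1
            (fun x _ => Real.rpow_nonneg (abs_nonneg _) _))
            (hKsub 0 t le_rfl ht.1 ht.2) (by positivity)
  · have hftc : φ t = -∫ s in t..(1:ℝ), deriv φ s := by
      rw [integral_deriv_eq_sub (fun x _ => hd x) (hd'.intervalIntegrable _ _), hφ1, zero_sub, neg_neg]
    calc |φ t| = |∫ s in t..(1:ℝ), deriv φ s| := by rw [hftc, abs_neg]
      _ ≤ ∫ s in t..(1:ℝ), |deriv φ s| := abs_integral_le_integral_abs ht.2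
      _ ≤ (∫ s in t..(1:ℝ), |deriv φ s| ^ p) ^ (1/p) * (1 - t) ^ (1 - 1/p) :=
          holder_interval hd' hcs' hp ht.2
      _ ≤ K ^ (1/p) * (1 - t) ^ (1 - 1/p) := by
          apply mul_le_mul_of_nonneg_right _ (Real.rpow_nonneg (by linarith [ht.2]) _)
          exact Real.rpow_le_rpow (intervalIntegral.integral_nonneg ht.2
            (fun x _ => Real.rpow_nonneg (abs_nonneg _) _))
            (hKsub t 1 ht.1 ht.2 le_rfl) (by positivity)

lemma element_bound {p q : ℝ} (hp : 1 < p) (hq : 1 ≤ q)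
    {φ : ℝ → ℝ} (hφ : ContDiff ℝ (⊤ : ℕ∞) φ) (hcs : HasCompactSupport φ)
    (hsupp : tsupport φ ⊆ Set.Ioo 0 1)
    (hnorm : (∫ t in Set.Ioo (0:ℝ) 1, |φ t| ^ q) = 1) :
    (2 ^ (q * (1 - 1/p)) * (q * (1 - 1/p) + 1)) ^ (p/q) ≤
      ∫ t in Set.Ioo (0:ℝ) 1, |deriv φ t| ^ p := by
  have hp0 : (0:ℝ) < p := lt_trans one_pos hp
  have hq0 : (0:ℝ) < q := lt_of_lt_of_le one_pos hq
  set c : ℝ := 1 - 1/p with hc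
  have hc0 : 0 < c := by
    have : 1/p < 1 := by rw [div_lt_one hp0]; exact hp
    simp only [hc]; linarith
  set α : ℝ := q * c with hα
  have hα0 : 0 < α := mul_pos hq0 hc0
  set K := ∫ t in Set.Ioo (0:ℝ) 1, |deriv φ t| ^ p with hKdef
  have hK0 : 0 ≤ K :=
    setIntegral_nonneg measurableSet_Ioo (fun x _ => Real.rpow_nonneg (abs_nonneg _) _)
  set M : ℝ := K ^ (1/p) with hM
  have hM0 : 0 ≤ M := Real.rpow_nonneg hK0 _
  -- continuity of |φ|^q
  have hφc : Continuous fun t => |φ t| ^ q :=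
    ((hφ.continuous).abs).rpow_const (fun x => Or.inr hq0.le)
  -- continuity of the comparison functions
  have hrc : ∀ d : ℝ, Continuous fun t : ℝ => (d - t) ^ α := by
    intro d
    rw [continuous_iff_continuousAt]
    intro x
    exact (Real.continuousAt_rpow_const _ _ (Or.inr hα0.le)).comp
      ((continuous_const.sub continuous_id).continuousAt)
  have htc : Continuous fun t : ℝ => t ^ α := by
    rw [continuous_iff_continuousAt]
    intro x
    exact (Real.continuousAt_rpow_const _ _ (Or.inr hα0.le))
  -- step 1: 1 = interval integral
  have h1 : (1:ℝ) = (∫ t in (0:ℝ)..(1/2), |φ t| ^ q) + ∫ t in (1/2:ℝ)..1, |φ t| ^ q := by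
    rw [integral_add_adjacent_intervals (hφc.intervalIntegrable _ _) (hφc.intervalIntegrable _ _),
      integral_of_le zero_le_one, integral_Ioc_eq_integral_Ioo, hnorm]
  -- bound on the left half
  have hb1 : (∫ t in (0:ℝ)..(1/2), |φ t| ^ q) ≤ ∫ t in (0:ℝ)..(1/2), M ^ q * t ^ α := by
    apply integral_mono_on (by norm_num)
      (hφc.intervalIntegrable _ _)
      ((continuous_const.mul htc).intervalIntegrable _ _)
    intro t ht
    have ht01 : t ∈ Icc (0:ℝ) 1 := ⟨ht.1, ht.2.trans (by norm_num)⟩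
    have hpt := (pointwise_bound hφ hcs hsupp hp ht01).1
    calc |φ t| ^ q ≤ (M * t ^ c) ^ q :=
          Real.rpow_le_rpow (abs_nonneg _) hpt hq0.le
      _ = M ^ q * t ^ α := by
          rw [Real.mul_rpow hM0 (Real.rpow_nonneg ht.1 _), ← Real.rpow_mul ht.1, hα, mul_comm c q]
  -- bound on the right half
  have hb2 : (∫ t in (1/2:ℝ)..1, |φ t| ^ q) ≤ ∫ t in (1/2:ℝ)..1, M ^ q * (1 - t) ^ α := by
    apply integral_mono_on (by norm_num)
      (hφc.intervalIntegrable _ _)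
      ((continuous_const.mul (hrc 1)).intervalIntegrable _ _)
    intro t ht
    have ht01 : t ∈ Icc (0:ℝ) 1 := ⟨le_trans (by norm_num) ht.1, ht.2⟩
    have h1t : (0:ℝ) ≤ 1 - t := by linarith [ht.2]
    have hpt := (pointwise_bound hφ hcs hsupp hp ht01).2
    calc |φ t| ^ q ≤ (M * (1 - t) ^ c) ^ q :=
          Real.rpow_le_rpow (abs_nonneg _) hpt hq0.le
      _ = M ^ q * (1 - t) ^ α := by
          rw [Real.mul_rpow hM0 (Real.rpow_nonneg h1t _), ← Real.rpow_mul h1t, hα, mul_comm c q]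
  -- compute the two integrals
  have hint1 : (∫ t in (0:ℝ)..(1/2), t ^ α) = (1/2 : ℝ) ^ (α + 1) / (α + 1) := by
    rw [integral_rpow (Or.inl (by linarith))]
    rw [Real.zero_rpow (by linarith), sub_zero]
  have hint2 : (∫ t in (1/2:ℝ)..1, (1 - t) ^ α) = (1/2 : ℝ) ^ (α + 1) / (α + 1) := by
    have := intervalIntegral.integral_comp_sub_left (a := (1/2:ℝ)) (b := 1)
      (fun u : ℝ => u ^ α) 1
    norm_num at this
    rw [this, integral_rpow (Or.inl (by linarith)),
      Real.zero_rpow (by linarith), sub_zero]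
  have hS0 : 0 < (1/2 : ℝ) ^ (α + 1) / (α + 1) :=
    div_pos (Real.rpow_pos_of_pos (by norm_num) _) (by linarith)
  have hhalf : (1/2 : ℝ) ^ (α + 1) = 2 ^ (-(α+1)) := by
    rw [one_div, ← Real.rpow_neg_one 2, ← Real.rpow_mul (by norm_num), neg_one_mul]
  have h2α : (0:ℝ) < 2 ^ α := Real.rpow_pos_of_pos (by norm_num) _
  have hA0 : (0:ℝ) < 2 ^ α * (α + 1) := mul_pos h2α (by linarith)
  have h2 : (1/2 : ℝ) ^ (α + 1) / (α + 1) + (1/2 : ℝ) ^ (α + 1) / (α + 1)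
      = (2 ^ α * (α + 1))⁻¹ := by
    rw [hhalf, Real.rpow_neg (by norm_num), Real.rpow_add (by norm_num) α 1, Real.rpow_one]
    field_simp
    ring
  have hmain : (1:ℝ) ≤ M ^ q * (2 ^ α * (α + 1))⁻¹ := by
    have e1 : (∫ t in (0:ℝ)..(1/2), M ^ q * t ^ α)
        = M ^ q * ((1/2 : ℝ) ^ (α + 1) / (α + 1)) := by
      rw [intervalIntegral.integral_const_mul, hint1]
    have e2 : (∫ t in (1/2:ℝ)..1, M ^ q * (1 - t) ^ α)
        = M ^ q * ((1/2 : ℝ) ^ (α + 1) / (α + 1)) := by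
      rw [intervalIntegral.integral_const_mul, hint2]
    rw [e1] at hb1; rw [e2] at hb2
    rw [← h2, mul_add]
    linarith
  have hMq : 2 ^ α * (α + 1) ≤ M ^ q := by
    rw [← div_eq_mul_inv, le_div_iff₀ hA0, one_mul] at hmain
    exact hmain
  -- conclude
  have hMK : M ^ q = K ^ (q/p) := by
    rw [hM, ← Real.rpow_mul hK0, one_div, inv_mul_eq_div]
  have hfin : (2 ^ α * (α + 1)) ^ (p/q) ≤ (K ^ (q/p)) ^ (p/q) :=
    Real.rpow_le_rpow hA0.le (hMK ▸ hMq) (by positivity)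
  rwa [← Real.rpow_mul hK0, div_mul_div_comm, mul_comm q p, div_self (by positivity),
    Real.rpow_one] at hfin

lemma set_nonempty (q : ℝ) (hq : 1 ≤ q) :
    ∃ φ : ℝ → ℝ, ContDiff ℝ (⊤ : ℕ∞) φ ∧ HasCompactSupport φ ∧
      tsupport φ ⊆ Set.Ioo 0 1 ∧ (∫ t in Set.Ioo (0:ℝ) 1, |φ t| ^ q) = 1 := by
  have hq0 : (0:ℝ) < q := lt_of_lt_of_le one_pos hq
  set f : ContDiffBump (1/2 : ℝ) := ⟨1/4, 1/3, by norm_num, by norm_num⟩ with hf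
  have hts : tsupport f ⊆ Set.Ioo 0 1 := by
    rw [f.tsupport_eq, Real.closedBall_eq_Icc]
    intro x hx
    constructor <;> [skip; skip] <;> simp [hf] at hx ⊢ <;> linarith [hx.1, hx.2]
  have hcont : Continuous f := f.continuous
  have hfq_cont : Continuous fun t : ℝ => (f t) ^ q :=
    hcont.rpow_const (fun x => Or.inr hq0.le)
  set I := ∫ t in Set.Ioo (0:ℝ) 1, (f t) ^ q with hI
  have hInt : IntegrableOn (fun t : ℝ => (f t) ^ q) (Set.Ioo 0 1) :=
    (hfq_cont.integrableOn_Icc (a := 0) (b := 1)).mono_set Ioo_subset_Icc_self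
  have hIpos : 0 < I := by
    rw [hI]
    apply (setIntegral_pos_iff_support_of_nonneg_ae
      (Filter.Eventually.of_forall fun x => Real.rpow_nonneg f.nonneg _) hInt).2
    have hsub : Metric.ball (1/2 : ℝ) (1/3) ⊆
        Function.support (fun t : ℝ => (f t) ^ q) ∩ Set.Ioo 0 1 := by
      intro x hx
      refine ⟨?_, ?_⟩
      · have := f.pos_of_mem_ball (by simpa [hf] using hx)
        exact (Real.rpow_pos_of_pos this q).ne'
      · rw [Real.ball_eq_Ioo] at hx
        constructor <;> simp at hx ⊢ <;> linarith [hx.1, hx.2]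
    calc (0:ℝ≥0∞) < volume (Metric.ball (1/2 : ℝ) (1/3)) :=
          Metric.measure_ball_pos volume _ (by norm_num)
      _ ≤ _ := measure_mono hsub
  set c : ℝ := I ^ (-(1/q)) with hc
  have hc0 : 0 < c := Real.rpow_pos_of_pos hIpos _
  refine ⟨fun t => c * f t, ?_, ?_, ?_, ?_⟩
  · exact (f.contDiff (n := (⊤ : ℕ∞))).const_smul c
  · exact f.hasCompactSupport.mul_left
  · refine (closure_mono ?_).trans hts
    intro x hx
    simp only [Function.mem_support] at hx ⊢
    intro h; exact hx (by rw [h, mul_zero])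
  · have hpt : ∀ t : ℝ, |c * f t| ^ q = c ^ q * (f t) ^ q := by
      intro t
      rw [abs_of_nonneg (mul_nonneg hc0.le f.nonneg), Real.mul_rpow hc0.le f.nonneg]
    simp_rw [hpt]
    rw [MeasureTheory.integral_const_mul, ← hI]
    have hcq : c ^ q = I⁻¹ := by
      rw [hc, ← Real.rpow_mul hIpos.le, show -(1/q) * q = -1 by field_simp,
        Real.rpow_neg_one]
    rw [hcq, inv_mul_cancel₀ hIpos.ne']

/-- Lower bound for the sharp one-dimensional Poincaré–Sobolev constant:
`π_{p,q} = (inf {∫₀¹ |φ'|^p : φ ∈ C_0^∞((0,1)), ‖φ‖_{L^q(0,1)} = 1})^{1/p}`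
satisfies `π_{p,q} ≥ 2^{1-1/p} (q(1-1/p)+1)^{1/q}` for `1 < p < ∞`, `1 ≤ q < ∞`. -/
theorem one_dim_poincare_sobolev_lower_bound (p q : ℝ) (hp : 1 < p) (hq : 1 ≤ q) :
    2 ^ (1 - 1/p) * (q * (1 - 1/p) + 1) ^ (1/q) ≤
      (sInf {E : ℝ | ∃ φ : ℝ → ℝ, ContDiff ℝ (⊤ : ℕ∞) φ ∧ HasCompactSupport φ ∧
        tsupport φ ⊆ Set.Ioo 0 1 ∧ (∫ t in Set.Ioo (0:ℝ) 1, |φ t| ^ q) = 1 ∧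
        E = ∫ t in Set.Ioo (0:ℝ) 1, |deriv φ t| ^ p}) ^ (1/p) := by
  have hp0 : (0:ℝ) < p := lt_trans one_pos hp
  have hq0 : (0:ℝ) < q := lt_of_lt_of_le one_pos hq
  set α : ℝ := q * (1 - 1/p) with hα
  have hc0 : 0 < 1 - 1/p := by
    have : 1/p < 1 := by rw [div_lt_one hp0]; exact hp
    linarith
  have hα0 : 0 < α := mul_pos hq0 hc0
  set A : ℝ := 2 ^ α * (α + 1) with hA
  have hA0 : (0:ℝ) < A := mul_pos (Real.rpow_pos_of_pos (by norm_num) _) (by linarith)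
  set S : Set ℝ := {E : ℝ | ∃ φ : ℝ → ℝ, ContDiff ℝ (⊤ : ℕ∞) φ ∧ HasCompactSupport φ ∧
      tsupport φ ⊆ Set.Ioo 0 1 ∧ (∫ t in Set.Ioo (0:ℝ) 1, |φ t| ^ q) = 1 ∧
      E = ∫ t in Set.Ioo (0:ℝ) 1, |deriv φ t| ^ p} with hS
  have hne : S.Nonempty := by
    obtain ⟨φ, h1, h2, h3, h4⟩ := set_nonempty q hq
    exact ⟨_, φ, h1, h2, h3, h4, rfl⟩
  have hlb : ∀ E ∈ S, A ^ (p/q) ≤ E := by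
    rintro E ⟨φ, h1, h2, h3, h4, rfl⟩
    exact element_bound hp hq h1 h2 h3 h4
  have hsInf : A ^ (p/q) ≤ sInf S := le_csInf hne hlb
  calc 2 ^ (1 - 1/p) * (q * (1 - 1/p) + 1) ^ (1/q) = A ^ (1/q) := by
        rw [hA, Real.mul_rpow (Real.rpow_pos_of_pos (by norm_num) _).le (by linarith),
          ← Real.rpow_mul (by norm_num : (0:ℝ) ≤ 2), hα,
          show q * (1 - 1/p) * (1/q) = 1 - 1/p by field_simp]
    _ = (A ^ (p/q)) ^ (1/p) := by
        rw [← Real.rpow_mul hA0.le, show p/q * (1/p) = 1/q by field_simp]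
    _ ≤ (sInf S) ^ (1/p) :=
        Real.rpow_le_rpow (Real.rpow_nonneg hA0.le _) hsInf (by positivity)
end

section
/- For p > N, the sharp Morrey constant 𝔪_p(Ω) = inf{∫_Ω|∇u|^p : u ∈ C_0^∞(Ω), [u]_{C^{0,α_p}(closure Ω)} = 1}, with α_p = 1 - N/p, is independent of the open set Ω ⊆ ℝ^N: 𝔪_p(Ω) = 𝔪_p(ℝ^N). -/
open Set Metric MeasureTheory

/-- The sharp Morrey constant on an open set `Ω ⊆ ℝ^N`:
`𝔪_p(Ω) = inf {∫_Ω |∇u|^p : u ∈ C_0^∞(Ω), [u]_{C^{0,α_p}(closure Ω)} = 1}`, `α_p = 1 - N/p`. -/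
noncomputable def morreyConstOn {N : ℕ} (p : ℝ) (Ω : Set (EuclideanSpace ℝ (Fin N))) : ℝ :=
  sInf {E : ℝ | ∃ u : EuclideanSpace ℝ (Fin N) → ℝ, ContDiff ℝ (⊤ : ℕ∞) u ∧
    HasCompactSupport u ∧ tsupport u ⊆ Ω ∧
    holderSem (1 - (N : ℝ)/p) (closure Ω) u = 1 ∧
    E = ∫ x in Ω, ‖gradient u x‖ ^ p}

section Aux

variable {N : ℕ}

local notation "EN" => EuclideanSpace ℝ (Fin N)

lemma gradient_eq_zero_of_not_mem_tsupport {u : EN → ℝ} {x : EN} (hx : x ∉ tsupport u) :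
    gradient u x = 0 := by
  have h : fderiv ℝ u x = 0 := by
    by_contra h
    exact hx (support_fderiv_subset ℝ (Function.mem_support.2 h))
  simp [gradient, h]

lemma setIntegral_energy {p : ℝ} (hp : p ≠ 0) {u : EN → ℝ} {Ω : Set EN}
    (hsub : tsupport u ⊆ Ω) :
    ∫ x in Ω, ‖gradient u x‖ ^ p = ∫ x, ‖gradient u x‖ ^ p :=
  setIntegral_eq_integral_of_forall_compl_eq_zero fun x hx => by
    rw [gradient_eq_zero_of_not_mem_tsupport (fun h => hx (hsub h))]
    simp [Real.zero_rpow hp]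

lemma exists_frontier_mem_segment {Ω : Set EN} (hΩ : IsOpen Ω) {x y : EN}
    (hx : x ∈ Ω) (hy : y ∉ closure Ω) : ∃ z ∈ segment ℝ x y, z ∈ frontier Ω := by
  by_contra h
  push_neg at h
  have hconn : IsPreconnected (segment ℝ x y) := (convex_segment x y).isPreconnected
  have hsub : segment ℝ x y ⊆ Ω ∪ (closure Ω)ᶜ := by
    intro z hz
    by_cases hzc : z ∈ closure Ω
    · left
      by_contra hzΩ
      exact h z hz (by rw [hΩ.frontier_eq]; exact ⟨hzc, hzΩ⟩)
    · exact Or.inr hzc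
  obtain ⟨z, hz, hzΩ, hzc⟩ := hconn Ω (closure Ω)ᶜ hΩ isClosed_closure.isOpen_compl hsub
    ⟨x, left_mem_segment ℝ x y, hx⟩ ⟨y, right_mem_segment ℝ x y, hy⟩
  exact hzc (subset_closure hzΩ)

lemma norm_sub_le_of_mem_segment' {x y z : EN} (hz : z ∈ segment ℝ x y) :
    ‖x - z‖ ≤ ‖x - y‖ := by
  obtain ⟨a, b, ha, hb, hab, rfl⟩ := hz
  have hxz : x - (a • x + b • y) = b • (x - y) := by
    have ha' : a = 1 - b := by linarith
    subst ha'
    module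
  rw [hxz, norm_smul, Real.norm_eq_abs, abs_of_nonneg hb]
  exact mul_le_of_le_one_left (norm_nonneg _) (by linarith)

lemma term_le_holderSem {α : ℝ} (hα : 0 ≤ α) {Ω : Set EN} (hΩ : IsOpen Ω)
    {u : EN → ℝ} (hsupp : tsupport u ⊆ Ω) {x : EN} (y : EN) (hx : x ∈ closure Ω) :
    ENNReal.ofReal (|u x - u y| / ‖x - y‖ ^ α) ≤ holderSem α (closure Ω) u := by
  by_cases hy : y ∈ closure Ω
  · exact le_iSup₂_of_le x hx (le_iSup₂_of_le y hy le_rfl)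
  · have huy : u y = 0 := by
      by_contra h
      exact hy (subset_closure (hsupp (subset_tsupport u (Function.mem_support.2 h))))
    by_cases hux : u x = 0
    · simp [huy, hux]
    · have hxΩ : x ∈ Ω := hsupp (subset_tsupport u (Function.mem_support.2 hux))
      obtain ⟨z, hzseg, hzfr⟩ := exists_frontier_mem_segment hΩ hxΩ hy
      have hzΩ : z ∉ Ω := fun hh => (hΩ.frontier_eq ▸ hzfr).2 hh
      have huz : u z = 0 := by
        by_contra h
        exact hzΩ (hsupp (subset_tsupport u (Function.mem_support.2 h)))
      have hxz : x ≠ z := fun hh => hzΩ (hh ▸ hxΩ)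
      have hpos : (0 : ℝ) < ‖x - z‖ ^ α :=
        Real.rpow_pos_of_pos (by rwa [norm_sub_pos_iff]) α
      have hratio : |u x - u y| / ‖x - y‖ ^ α ≤ |u x - u z| / ‖x - z‖ ^ α := by
        rw [huy, huz]
        exact div_le_div_of_nonneg_left (abs_nonneg _) hpos
          (Real.rpow_le_rpow (norm_nonneg _) (norm_sub_le_of_mem_segment' hzseg) hα)
      exact le_trans (ENNReal.ofReal_le_ofReal hratio)
        (le_iSup₂_of_le x hx (le_iSup₂_of_le z (frontier_subset_closure hzfr) le_rfl))

lemma holderSem_closure_eq {α : ℝ} (hα : 0 ≤ α) {Ω : Set EN} (hΩ : IsOpen Ω)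
    {u : EN → ℝ} (hsupp : tsupport u ⊆ Ω) :
    holderSem α univ u = holderSem α (closure Ω) u := by
  apply le_antisymm
  · rw [holderSem]
    simp only [iSup_univ]
    refine iSup_le fun x => iSup_le fun y => ?_
    by_cases hx : x ∈ closure Ω
    · exact term_le_holderSem hα hΩ hsupp y hx
    · by_cases hy : y ∈ closure Ω
      · rw [abs_sub_comm, norm_sub_rev]
        exact term_le_holderSem hα hΩ hsupp x hy
      · have hux : u x = 0 := by
          by_contra h
          exact hx (subset_closure (hsupp (subset_tsupport u (Function.mem_support.2 h))))
        have huy : u y = 0 := by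
          by_contra h
          exact hy (subset_closure (hsupp (subset_tsupport u (Function.mem_support.2 h))))
        simp [hux, huy]
  · exact iSup₂_le fun x hx => iSup₂_le fun y hy =>
      le_iSup₂_of_le x (mem_univ x) (le_iSup₂_of_le y (mem_univ y) le_rfl)

lemma holderSem_scale {α l : ℝ} (hl : 0 < l) (x₀ : EN) (u : EN → ℝ) :
    holderSem α univ (fun x => l ^ α * u (l⁻¹ • (x - x₀))) = holderSem α univ u := by
  set A : EN → EN := fun x => l⁻¹ • (x - x₀) with hA
  have hsurj : Function.Surjective A := by
    intro s
    refine ⟨x₀ + l • s, ?_⟩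
    simp only [hA, add_sub_cancel_left, smul_smul, inv_mul_cancel₀ hl.ne', one_smul]
  set G : EN → EN → ENNReal := fun a b => ENNReal.ofReal (|u a - u b| / ‖a - b‖ ^ α) with hG
  have key : ∀ x y : EN,
      ENNReal.ofReal (|l ^ α * u (A x) - l ^ α * u (A y)| / ‖x - y‖ ^ α) = G (A x) (A y) := by
    intro x y
    have hnorm : ‖x - y‖ = l * ‖A x - A y‖ := by
      rw [hA]
      simp only [← smul_sub, show (x - x₀) - (y - x₀) = x - y by abel, norm_smul,
        Real.norm_eq_abs, abs_of_pos (inv_pos.2 hl)]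
      field_simp
    rw [hG, ← mul_sub, abs_mul, abs_of_nonneg (Real.rpow_nonneg hl.le α), hnorm,
      Real.mul_rpow hl.le (norm_nonneg _),
      mul_div_mul_left _ _ (ne_of_gt (Real.rpow_pos_of_pos hl _))]
  have h1 : holderSem α univ (fun x => l ^ α * u (A x)) = ⨆ x, ⨆ y, G (A x) (A y) := by
    rw [holderSem]
    simp only [iSup_univ]
    exact iSup_congr fun x => iSup_congr fun y => key x y
  have h2 : holderSem α univ u = ⨆ a, ⨆ b, G a b := by
    rw [holderSem]; simp only [iSup_univ, hG]
  rw [h1, h2]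
  have h3 : (⨆ x, ⨆ y, G (A x) (A y)) = ⨆ a, ⨆ y, G a (A y) :=
    hsurj.iSup_comp (g := fun a => ⨆ y, G a (A y))
  rw [h3]
  exact iSup_congr fun a => hsurj.iSup_comp (g := fun b => G a b)

lemma gradient_scale {u : EN → ℝ} (hu : ContDiff ℝ (⊤ : ℕ∞) u) {l : ℝ} (hl : 0 < l)
    (x₀ : EN) (c : ℝ) (x : EN) :
    gradient (fun x => c * u (l⁻¹ • (x - x₀))) x
      = (c * l⁻¹) • gradient u (l⁻¹ • (x - x₀)) := by
  have hA : HasFDerivAt (fun x : EN => l⁻¹ • (x - x₀))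
      (l⁻¹ • ContinuousLinearMap.id ℝ EN) x :=
    ((hasFDerivAt_id x).sub_const x₀).const_smul l⁻¹
  have hu' : HasFDerivAt u (fderiv ℝ u (l⁻¹ • (x - x₀))) (l⁻¹ • (x - x₀)) :=
    (hu.differentiable (by simp) _).hasFDerivAt
  have hcomp : HasFDerivAt (fun x => c * u (l⁻¹ • (x - x₀)))
      (c • ((fderiv ℝ u (l⁻¹ • (x - x₀))).comp (l⁻¹ • ContinuousLinearMap.id ℝ EN))) x :=
    (hu'.comp x hA).const_mul c
  have heq : c • ((fderiv ℝ u (l⁻¹ • (x - x₀))).comp (l⁻¹ • ContinuousLinearMap.id ℝ EN))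
      = (c * l⁻¹) • fderiv ℝ u (l⁻¹ • (x - x₀)) := by
    ext w
    simp [ContinuousLinearMap.smul_apply, ContinuousLinearMap.comp_apply, _root_.map_smul,
      smul_eq_mul]
    ring
  rw [gradient, hcomp.fderiv, heq, _root_.map_smul]
  rfl

lemma energy_scale {u : EN → ℝ} (hu : ContDiff ℝ (⊤ : ℕ∞) u) {l p α : ℝ} (hl : 0 < l)
    (x₀ : EN) (hexp : (α - 1) * p + N = 0) :
    ∫ x, ‖gradient (fun x => l ^ α * u (l⁻¹ • (x - x₀))) x‖ ^ p
      = ∫ x, ‖gradient u x‖ ^ p := by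
  have hc : l ^ α * l⁻¹ = l ^ (α - 1) := by
    rw [Real.rpow_sub hl, Real.rpow_one, div_eq_mul_inv]
  have h1 : ∀ x : EN, ‖gradient (fun x => l ^ α * u (l⁻¹ • (x - x₀))) x‖ ^ p
      = l ^ ((α - 1) * p) * ‖gradient u (l⁻¹ • (x - x₀))‖ ^ p := by
    intro x
    rw [gradient_scale hu hl x₀ _ x, norm_smul, Real.norm_eq_abs, hc,
      abs_of_pos (Real.rpow_pos_of_pos hl _),
      Real.mul_rpow (Real.rpow_nonneg hl.le _) (norm_nonneg _),
      ← Real.rpow_mul hl.le]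
  simp only [h1]
  rw [integral_const_mul]
  have h2 : (∫ x : EN, ‖gradient u (l⁻¹ • (x - x₀))‖ ^ p)
      = l ^ (N : ℕ) * ∫ x : EN, ‖gradient u x‖ ^ p := by
    have ht : (∫ x : EN, ‖gradient u (l⁻¹ • (x - x₀))‖ ^ p)
        = ∫ x : EN, (fun y : EN => ‖gradient u (l⁻¹ • y)‖ ^ p) (x - x₀) := rfl
    rw [ht, integral_sub_right_eq_self (fun y : EN => ‖gradient u (l⁻¹ • y)‖ ^ p) x₀,
      Measure.integral_comp_inv_smul_of_nonneg (volume : Measure EN)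
        (fun y : EN => ‖gradient u y‖ ^ p) hl.le]
    simp [finrank_euclideanSpace_fin, smul_eq_mul]
  rw [h2, ← mul_assoc, ← Real.rpow_natCast l N, ← Real.rpow_add hl, hexp, Real.rpow_zero,
    one_mul]

end Aux

/-- For `p > N`, the sharp Morrey constant does not depend on the open set:
`𝔪_p(Ω) = 𝔪_p(ℝ^N)`. -/
theorem morreyConstOn_eq_univ {N : ℕ} (hN : 0 < N) (p : ℝ) (hp : (N : ℝ) < p)
    (Ω : Set (EuclideanSpace ℝ (Fin N))) (hΩ : IsOpen Ω) (hΩne : Ω.Nonempty) :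
    morreyConstOn p Ω = morreyConstOn p (Set.univ : Set (EuclideanSpace ℝ (Fin N))) := by
  have hp0 : (0 : ℝ) < p := (Nat.cast_nonneg N).trans_lt hp
  have hα : (0 : ℝ) < 1 - (N : ℝ) / p := by
    have h1 : (N : ℝ) / p < 1 := (div_lt_one hp0).2 hp
    linarith
  have hexp : ((1 - (N : ℝ) / p) - 1) * p + (N : ℝ) = 0 := by
    field_simp
    ring
  unfold morreyConstOn
  congr 1
  ext r
  simp only [Set.mem_setOf_eq]
  constructor
  · rintro ⟨u, hsm, hcs, hsub, hhold, hen⟩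
    refine ⟨u, hsm, hcs, subset_univ _, ?_, ?_⟩
    · rw [closure_univ, holderSem_closure_eq hα.le hΩ hsub]
      exact hhold
    · rw [setIntegral_univ, ← setIntegral_energy hp0.ne' hsub]
      exact hen
  · rintro ⟨u, hsm, hcs, -, hhold, hen⟩
    rw [closure_univ] at hhold
    obtain ⟨x₀, hx₀⟩ := hΩne
    obtain ⟨ε, hε, hball⟩ := Metric.isOpen_iff.1 hΩ x₀ hx₀
    obtain ⟨R, hR⟩ := hcs.isBounded.subset_closedBall 0
    set R' : ℝ := max R 1 with hR'def
    have hR'1 : (1 : ℝ) ≤ R' := le_max_right _ _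
    have hR'0 : (0 : ℝ) < R' := zero_lt_one.trans_le hR'1
    have hsubR : tsupport u ⊆ closedBall 0 R' :=
      hR.trans (closedBall_subset_closedBall (le_max_left _ _))
    set l : ℝ := ε / (2 * R') with hldef
    have hl : 0 < l := div_pos hε (by positivity)
    set v : EuclideanSpace ℝ (Fin N) → ℝ :=
      fun x => l ^ (1 - (N : ℝ) / p) * u (l⁻¹ • (x - x₀)) with hv
    have hAcont : Continuous fun x : EuclideanSpace ℝ (Fin N) => l⁻¹ • (x - x₀) := by
      fun_prop
    have hsubv : tsupport v ⊆ (fun x => l⁻¹ • (x - x₀)) ⁻¹' tsupport u := by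
      apply closure_minimal ?_ ((isClosed_tsupport u).preimage hAcont)
      intro x hx
      have hne : u (l⁻¹ • (x - x₀)) ≠ 0 := by
        intro h0
        apply hx
        simp [hv, h0]
      exact subset_tsupport u hne
    have hpre : (fun x : EuclideanSpace ℝ (Fin N) => l⁻¹ • (x - x₀)) ⁻¹' tsupport u
        = (fun s : EuclideanSpace ℝ (Fin N) => x₀ + l • s) '' tsupport u := by
      ext w
      simp only [mem_preimage, mem_image]
      constructor
      · intro hw
        exact ⟨l⁻¹ • (w - x₀), hw, by
          rw [smul_smul, mul_inv_cancel₀ hl.ne', one_smul]; abel⟩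
      · rintro ⟨s, hs, rfl⟩
        simpa [add_sub_cancel_left, smul_smul, inv_mul_cancel₀ hl.ne'] using hs
    have hsubΩ : tsupport v ⊆ Ω := by
      intro x hx
      obtain ⟨s, hs, rfl⟩ := (hpre ▸ hsubv) hx
      apply hball
      have hns : ‖s‖ ≤ R' := by
        simpa [Metric.mem_closedBall, dist_zero_right] using hsubR hs
      have hdist : dist (x₀ + l • s) x₀ = l * ‖s‖ := by
        rw [dist_eq_norm]
        simp [norm_smul, abs_of_pos hl]
      rw [Metric.mem_ball, hdist]
      have h1 : l * ‖s‖ ≤ l * R' := mul_le_mul_of_nonneg_left hns hl.le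
      have h2 : l * R' = ε / 2 := by
        rw [hldef]; field_simp
      linarith
    have hcsv : HasCompactSupport v := by
      apply IsCompact.of_isClosed_subset ?_ (isClosed_tsupport v) (hpre ▸ hsubv)
      exact hcs.image (continuous_const.add (continuous_id.const_smul l))
    refine ⟨v, ?_, hcsv, hsubΩ, ?_, ?_⟩
    · exact contDiff_const.mul (hsm.comp ((contDiff_id.sub contDiff_const).const_smul l⁻¹))
    · rw [← holderSem_closure_eq hα.le hΩ hsubΩ]
      exact (holderSem_scale hl x₀ u).trans hhold
    · rw [setIntegral_energy hp0.ne' hsubΩ, hen, setIntegral_univ]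
      exact (energy_scale hsm hl x₀ hexp).symm
end
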